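/- arXiv:1805.11713 — 10 statements merged into one kernel-verified Lean document; each statement's English description precedes it below -/
import Mathlib

section
/- (Lemma 3.1, first part: Jacobian of an exponential integrator) Suppose that at a point y ∈ ℝ^n the matrix I_{sn} − h·Ā·F(y) is invertible. Then the Jacobian matrix of φ at y equals exp(h·K) + h·W(y)·(I_{sn} − h·Ā·F(y))^{−1}·C. -/
open Matrix

noncomputable def mvCLM {n : ℕ} (M : Matrix (Fin n) (Fin n) ℝ) : (Fin n → ℝ) →L[ℝ] (Fin n → ℝ) :=
  LinearMap.toContinuousLinearMap (M.mulVecLin)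

/-- The Jacobian matrix of a map `f : ℝ^ι → ℝ^ι` at a point `y`. -/
noncomputable def jac {ι : Type*} [Fintype ι] [DecidableEq ι]
    (f : (ι → ℝ) → (ι → ℝ)) (y : ι → ℝ) : Matrix ι ι ℝ :=
  LinearMap.toMatrix' ((fderiv ℝ f y).toLinearMap)

lemma toMatrix'_mvCLM {n : ℕ} (M : Matrix (Fin n) (Fin n) ℝ) :
    LinearMap.toMatrix' ((mvCLM M).toLinearMap) = M := by
  have : (mvCLM M).toLinearMap = Matrix.toLin' M := by
    ext v; simp [mvCLM, Matrix.toLin'_apply]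
  rw [this, LinearMap.toMatrix'_toLin']

lemma jac_of_form {n s : ℕ} (h : ℝ) (E : Matrix (Fin n) (Fin n) ℝ)
    (A : Fin s → Matrix (Fin n) (Fin n) ℝ)
    (g : (Fin n → ℝ) → (Fin n → ℝ)) (hg : Differentiable ℝ g)
    (k : Fin s → (Fin n → ℝ) → (Fin n → ℝ)) (hk : ∀ i, Differentiable ℝ (k i))
    (f : (Fin n → ℝ) → (Fin n → ℝ)) (y : Fin n → ℝ)
    (hf : ∀ z, f z = E.mulVec z + h • ∑ j, (A j).mulVec (g (k j z))) :
    jac f y = E + h • ∑ j, A j * jac g (k j y) * jac (k j) y := by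
  have hd : HasFDerivAt f
      (mvCLM E + h • ∑ j, (mvCLM (A j)).comp
        ((fderiv ℝ g (k j y)).comp (fderiv ℝ (k j) y))) y := by
    have hfe : f = fun z => E.mulVec z + h • ∑ j, (A j).mulVec (g (k j z)) :=
      funext hf
    rw [hfe]
    apply HasFDerivAt.add
    · exact (mvCLM E).hasFDerivAt
    · refine HasFDerivAt.const_smul (f := fun z => ∑ j, (A j).mulVec (g (k j z))) ?_ h
      apply HasFDerivAt.fun_sum
      intro j _
      exact (mvCLM (A j)).hasFDerivAt.comp y
        (((hg (k j y)).hasFDerivAt).comp y ((hk j y).hasFDerivAt))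
  rw [jac, hd.fderiv]
  simp only [ContinuousLinearMap.coe_add, ContinuousLinearMap.coe_smul,
    ContinuousLinearMap.coe_sum, ContinuousLinearMap.coe_comp, map_add,
    map_sum, _root_.map_smul, LinearMap.toMatrix'_comp, toMatrix'_mvCLM]
  simp [jac, mul_assoc]
  congr 1
  refine Finset.sum_congr rfl fun j _ => ?_
  erw [LinearMap.toMatrix'_comp, LinearMap.toMatrix'_comp, toMatrix'_mvCLM]

/-- **Lemma 3.1, first part.** The Jacobian matrix of an exponential integrator. -/
theorem stmt_0 (n s : ℕ) (h : ℝ) (K : Matrix (Fin n) (Fin n) ℝ) (c : Fin s → ℝ)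
    (g : (Fin n → ℝ) → (Fin n → ℝ)) (hg : Differentiable ℝ g)
    (Abar : Fin s → Fin s → Matrix (Fin n) (Fin n) ℝ)
    (Bbar : Fin s → Matrix (Fin n) (Fin n) ℝ)
    (k : Fin s → (Fin n → ℝ) → (Fin n → ℝ))
    (hk : ∀ i, Differentiable ℝ (k i))
    (hkdef : ∀ i y, k i y =
      (NormedSpace.exp ((c i * h) • K)).mulVec y +
        h • ∑ j, (Abar i j).mulVec (g (k j y)))
    (φ : (Fin n → ℝ) → (Fin n → ℝ))
    (hφ : ∀ y, φ y =
      (NormedSpace.exp (h • K)).mulVec y + h • ∑ i, (Bbar i).mulVec (g (k i y)))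
    -- the big block matrices
    (F : (Fin n → ℝ) → Matrix (Fin s × Fin n) (Fin s × Fin n) ℝ)
    (hF : ∀ y p q, F y p q = if p.1 = q.1 then jac g (k p.1 y) p.2 q.2 else 0)
    (Ablk : Matrix (Fin s × Fin n) (Fin s × Fin n) ℝ)
    (hAblk : ∀ p q, Ablk p q = Abar p.1 q.1 p.2 q.2)
    (W : (Fin n → ℝ) → Matrix (Fin n) (Fin s × Fin n) ℝ)
    (hW : ∀ y a q, W y a q = (Bbar q.1 * jac g (k q.1 y)) a q.2)
    (C : Matrix (Fin s × Fin n) (Fin n) ℝ)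
    (hC : ∀ p b, C p b = NormedSpace.exp ((c p.1 * h) • K) p.2 b)
    (y : Fin n → ℝ)
    (hinv : IsUnit ((1 : Matrix (Fin s × Fin n) (Fin s × Fin n) ℝ) - h • (Ablk * F y))) :
    jac φ y = NormedSpace.exp (h • K) +
      h • (W y * ((1 : Matrix (Fin s × Fin n) (Fin s × Fin n) ℝ) - h • (Ablk * F y))⁻¹ * C) := by
  set G : Fin s → Matrix (Fin n) (Fin n) ℝ := fun j => jac g (k j y) with hG
  set J : Fin s → Matrix (Fin n) (Fin n) ℝ := fun j => jac (k j) y with hJ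
  -- stage Jacobian equations
  have hstage : ∀ i, J i = NormedSpace.exp ((c i * h) • K) +
      h • ∑ j, Abar i j * G j * J j := fun i =>
    jac_of_form h _ (Abar i) g hg k hk (k i) y (hkdef i)
  set M : Matrix (Fin s × Fin n) (Fin s × Fin n) ℝ :=
    (1 : Matrix (Fin s × Fin n) (Fin s × Fin n) ℝ) - h • (Ablk * F y) with hM
  set Jblk : Matrix (Fin s × Fin n) (Fin n) ℝ := fun p b => J p.1 p.2 b with hJblk
  have hFJ : ∀ (j : Fin s) (m : Fin n) (b : Fin n),
      (F y * Jblk) (j, m) b = (G j * J j) m b := by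
    intro j m b
    rw [Matrix.mul_apply, Fintype.sum_prod_type]
    simp only [hF, hJblk, Matrix.mul_apply, ite_mul, zero_mul]
    simp [Finset.sum_ite_eq, hG]
  have hAFJ : ∀ (p : Fin s × Fin n) (b : Fin n),
      (Ablk * (F y * Jblk)) p b = (∑ j, Abar p.1 j * (G j * J j)) p.2 b := by
    intro p b
    rw [Matrix.mul_apply, Fintype.sum_prod_type]
    rw [Matrix.sum_apply]
    refine Finset.sum_congr rfl fun j _ => ?_
    rw [Matrix.mul_apply]
    refine Finset.sum_congr rfl fun m _ => ?_
    rw [hAblk, hFJ]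
  have hMJ : M * Jblk = C := by
    have hexp : M * Jblk = Jblk - h • (Ablk * (F y * Jblk)) := by
      rw [hM, Matrix.sub_mul, Matrix.one_mul, Matrix.smul_mul, Matrix.mul_assoc]
    ext p b
    rw [hexp]
    have h2 := congrFun (congrFun (hstage p.1) p.2) b
    simp only [Matrix.sub_apply, Matrix.smul_apply, smul_eq_mul, hAFJ, hC]
    have hJb : Jblk p b = J p.1 p.2 b := rfl
    simp only [Matrix.add_apply, Matrix.smul_apply, smul_eq_mul, mul_assoc] at h2
    rw [hJb, h2]
    simp [mul_assoc]
  have hdet : IsUnit M.det := (Matrix.isUnit_iff_isUnit_det M).mp hinv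
  have hJblk_eq : Jblk = M⁻¹ * C := by
    rw [← hMJ, ← Matrix.mul_assoc, Matrix.nonsing_inv_mul M hdet, Matrix.one_mul]
  have hjφ : jac φ y = NormedSpace.exp (h • K) + h • ∑ i, Bbar i * G i * J i :=
    jac_of_form h _ Bbar g hg k hk φ y hφ
  rw [hjφ]
  congr 1
  rw [Matrix.mul_assoc, ← hJblk_eq]
  congr 1
  ext a b
  rw [Matrix.sum_apply, Matrix.mul_apply, Fintype.sum_prod_type]
  refine Finset.sum_congr rfl fun i _ => ?_
  rw [Matrix.mul_apply]
  refine Finset.sum_congr rfl fun m _ => ?_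
  rw [hW]
end

section
/- (Lemma 3.2) Suppose (A,b) is symplectic with b_i ≠ 0 for all i, and at a point y ∈ ℝ^n the matrix I_{sn} − h·Ā·F(y) is invertible. Then det(Dφ_h(y)) = 1 if and only if the VP condition holds for (A; F_1,…,F_s) with F_i = Dg(k_i(y)), i.e. det(I_{sn} − h·M(A;F)) = det(exp(h·K))·det(I_{sn} + h·M(Aᵀ;F)). -/
open Matrix

lemma jac_comp {ι : Type*} [Fintype ι] [DecidableEq ι]
    (g f : (ι → ℝ) → (ι → ℝ)) (y : ι → ℝ)
    (hg : DifferentiableAt ℝ g (f y)) (hf : DifferentiableAt ℝ f y) :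
    jac (fun z => g (f z)) y = jac g (f y) * jac f y := by
  have heq : (fun z => g (f z)) = g ∘ f := rfl
  have := (hg.hasFDerivAt.comp y hf.hasFDerivAt).fderiv
  rw [jac, heq, this]
  simp [jac, ContinuousLinearMap.coe_comp, LinearMap.toMatrix'_comp]

lemma jac_affine_sum {n m : ℕ} (h : ℝ) (P : Matrix (Fin n) (Fin n) ℝ)
    (Q : Fin m → Matrix (Fin n) (Fin n) ℝ) (u : Fin m → (Fin n → ℝ) → (Fin n → ℝ))
    (y : Fin n → ℝ) (hu : ∀ j, DifferentiableAt ℝ (u j) y) :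
    jac (fun z => P.mulVec z + h • ∑ j, (Q j).mulVec (u j z)) y
      = P + h • ∑ j, Q j * jac (u j) y := by
  have hd : HasFDerivAt (fun z => P.mulVec z + h • ∑ j, (Q j).mulVec (u j z))
      ((Matrix.mulVecLin P).toContinuousLinearMap +
        h • ∑ j, ((Matrix.mulVecLin (Q j)).toContinuousLinearMap).comp (fderiv ℝ (u j) y)) y := by
    apply HasFDerivAt.add
    · exact ((Matrix.mulVecLin P).toContinuousLinearMap).hasFDerivAt
    · exact (HasFDerivAt.fun_sum fun j _ =>
        (((Matrix.mulVecLin (Q j)).toContinuousLinearMap).hasFDerivAt.comp y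
          (hu j).hasFDerivAt)).const_smul h
  rw [jac, hd.fderiv]
  simp [ContinuousLinearMap.coe_sum, LinearMap.toMatrix'_comp, jac,
    ← Matrix.toLin'_apply', LinearMap.toMatrix'_toLin']

lemma expadd {n : ℕ} (K : Matrix (Fin n) (Fin n) ℝ) (a b : ℝ) :
    NormedSpace.exp (a • K) * NormedSpace.exp (b • K) = NormedSpace.exp ((a + b) • K) := by
  rw [add_smul, Matrix.exp_add_of_commute]
  exact ((Commute.refl K).smul_left a).smul_right b

lemma expinv {n : ℕ} (K : Matrix (Fin n) (Fin n) ℝ) (a : ℝ) :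
    NormedSpace.exp (a • K) * NormedSpace.exp ((-a) • K) = 1 := by
  rw [expadd, add_neg_cancel, zero_smul, NormedSpace.exp_zero]


/-- The block matrix `M(A;F)` whose `(i,j)` block is `a_{ij}·exp((c_i−c_j)·h·K)·F_j`. -/
noncomputable def Mblk {n s : ℕ} (h : ℝ) (K : Matrix (Fin n) (Fin n) ℝ) (c : Fin s → ℝ)
    (A : Matrix (Fin s) (Fin s) ℝ) (F : Fin s → Matrix (Fin n) (Fin n) ℝ) :
    Matrix (Fin s × Fin n) (Fin s × Fin n) ℝ :=
  fun p q => A p.1 q.1 * (NormedSpace.exp (((c p.1 - c q.1) * h) • K) * F q.1) p.2 q.2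

/-- A Runge–Kutta pair `(A, b)` is symplectic. -/
def IsSymplecticRK {s : ℕ} (A : Matrix (Fin s) (Fin s) ℝ) (b : Fin s → ℝ) : Prop :=
  ∀ i j, b i * A i j + b j * A j i - b i * b j = 0

/-- **Lemma 3.2.** For a special symplectic exponential integrator, the Jacobian of the
update map has determinant one iff the VP condition holds. -/
theorem stmt_2 (n s : ℕ) (h : ℝ) (K : Matrix (Fin n) (Fin n) ℝ) (c : Fin s → ℝ)
    (g : (Fin n → ℝ) → (Fin n → ℝ)) (hg : Differentiable ℝ g)
    (A : Matrix (Fin s) (Fin s) ℝ) (b : Fin s → ℝ)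
    (hsymp : IsSymplecticRK A b) (hb : ∀ i, b i ≠ 0)
    (k : Fin s → (Fin n → ℝ) → (Fin n → ℝ))
    (hk : ∀ i, Differentiable ℝ (k i))
    (hkdef : ∀ i y, k i y =
      (NormedSpace.exp ((c i * h) • K)).mulVec y +
        h • ∑ j, (A i j • NormedSpace.exp (((c i - c j) * h) • K)).mulVec (g (k j y)))
    (φ : (Fin n → ℝ) → (Fin n → ℝ))
    (hφ : ∀ y, φ y =
      (NormedSpace.exp (h • K)).mulVec y +
        h • ∑ i, (b i • NormedSpace.exp (((1 - c i) * h) • K)).mulVec (g (k i y)))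
    (y : Fin n → ℝ)
    (hinv : IsUnit ((1 : Matrix (Fin s × Fin n) (Fin s × Fin n) ℝ) -
      h • Mblk h K c A (fun j => jac g (k j y)))) :
    (jac φ y).det = 1 ↔
      ((1 : Matrix (Fin s × Fin n) (Fin s × Fin n) ℝ) -
          h • Mblk h K c A (fun j => jac g (k j y))).det =
        (NormedSpace.exp (h • K)).det *
          ((1 : Matrix (Fin s × Fin n) (Fin s × Fin n) ℝ) +
            h • Mblk h K c Aᵀ (fun j => jac g (k j y))).det := by
  classical
  set F : Fin s → Matrix (Fin n) (Fin n) ℝ := fun j => jac g (k j y) with hF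
  set J : Fin s → Matrix (Fin n) (Fin n) ℝ := fun i => jac (k i) y with hJdef
  set X : Fin s → Fin s → Matrix (Fin n) (Fin n) ℝ :=
    fun i j => NormedSpace.exp (((c i - c j) * h) • K) with hX
  set P : Matrix (Fin n) (Fin n) ℝ := NormedSpace.exp (h • K) with hP
  have hcomp : ∀ j, jac (fun z => g (k j z)) y = F j * J j :=
    fun j => jac_comp g (k j) y (hg _) (hk j y)
  -- stage Jacobian equations
  have hJ : ∀ i, J i = NormedSpace.exp ((c i * h) • K)
      + h • ∑ j, (A i j • X i j) * (F j * J j) := by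
    intro i
    have hki : k i = fun z => (NormedSpace.exp ((c i * h) • K)).mulVec z +
        h • ∑ j, (A i j • X i j).mulVec ((fun j z => g (k j z)) j z) := funext (hkdef i)
    have h2 := jac_affine_sum h (NormedSpace.exp ((c i * h) • K))
      (fun j => A i j • X i j) (fun j z => g (k j z)) y
      (fun j => ((hg (k j y)).comp y (hk j y)))
    show jac (k i) y = _
    rw [hki, h2]
    simp only [hcomp]
  -- update Jacobian equation
  have hphi : jac φ y = P + h • ∑ i,
      (b i • NormedSpace.exp (((1 - c i) * h) • K)) * (F i * J i) := by
    have hphieq : φ = fun z => P.mulVec z +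
        h • ∑ i, (b i • NormedSpace.exp (((1 - c i) * h) • K)).mulVec
          ((fun i z => g (k i z)) i z) := funext hφ
    have h2 := jac_affine_sum h P
      (fun i => b i • NormedSpace.exp (((1 - c i) * h) • K)) (fun i z => g (k i z)) y
      (fun i => ((hg (k i y)).comp y (hk i y)))
    rw [hphieq, h2]
    simp only [hcomp]
  -- block matrices
  set M1 : Matrix (Fin s × Fin n) (Fin s × Fin n) ℝ := Mblk h K c A F with hM1
  set M2 : Matrix (Fin s × Fin n) (Fin s × Fin n) ℝ := Mblk h K c Aᵀ F with hM2
  set W : Matrix (Fin s × Fin n) (Fin s × Fin n) ℝ := 1 - h • M1 with hW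
  set J' : Matrix (Fin s × Fin n) (Fin n) ℝ := fun p q => J p.1 p.2 q with hJ'
  set E' : Matrix (Fin s × Fin n) (Fin n) ℝ :=
    fun p q => NormedSpace.exp ((c p.1 * h) • K) p.2 q with hE'
  set B' : Matrix (Fin n) (Fin s × Fin n) ℝ :=
    fun x p => (b p.1 • (NormedSpace.exp (((1 - c p.1) * h) • K) * F p.1)) x p.2 with hB'
  set S : Matrix (Fin s × Fin n) (Fin s × Fin n) ℝ :=
    fun p q => b q.1 * (X p.1 q.1 * F q.1) p.2 q.2 with hS
  set Eneg : Matrix (Fin n) (Fin n) ℝ := NormedSpace.exp ((-1 * h) • K) with hEneg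
  -- L1
  have L1a : J' = E' + h • (M1 * J') := by
    ext p q
    have hrow := congrFun (congrFun (hJ p.1) p.2) q
    show J p.1 p.2 q = (E' + h • (M1 * J')) p q
    rw [hrow]
    simp only [Matrix.add_apply, Matrix.smul_apply, smul_eq_mul, Matrix.sum_apply, Matrix.mul_apply]
    simp only [Matrix.add_apply, Matrix.smul_apply, smul_eq_mul, Matrix.sum_apply,
      Matrix.mul_apply, Fintype.sum_prod_type, hE', hM1, hJ', Mblk, hX,
      smul_mul_assoc, Finset.mul_sum, Finset.sum_mul]
    refine congrArg _ (Finset.sum_congr rfl fun j _ => ?_)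
    rw [Finset.sum_comm]
    exact Finset.sum_congr rfl fun z _ => Finset.sum_congr rfl fun w _ => by ring
  have L1 : W * J' = E' := by
    rw [hW, Matrix.sub_mul, Matrix.one_mul, Matrix.smul_mul]
    nth_rewrite 1 [L1a]
    exact add_sub_cancel_right _ _
  -- L2
  have L2 : jac φ y = P + h • (B' * J') := by
    rw [hphi]
    congr 1
    congr 1
    ext x q
    simp only [Matrix.sum_apply, Matrix.mul_apply, Matrix.smul_apply]
    simp only [Matrix.sum_apply, Matrix.mul_apply, Fintype.sum_prod_type, hB', hJ',
      Matrix.smul_apply, smul_eq_mul, smul_mul_assoc, Finset.mul_sum, Finset.sum_mul]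
    refine Finset.sum_congr rfl fun i _ => ?_
    rw [Finset.sum_comm]
    exact Finset.sum_congr rfl fun z _ => Finset.sum_congr rfl fun w _ => by ring
  -- L3
  have key : ∀ i j, NormedSpace.exp ((c i * h) • K) * Eneg *
      (b j • (NormedSpace.exp (((1 - c j) * h) • K) * F j)) = b j • (X i j * F j) := by
    intro i j
    rw [hEneg, hX, mul_smul_comm, expadd, ← Matrix.mul_assoc, expadd]
    congr 3
    ring
  have L3 : E' * Eneg * B' = S := by
    ext p q
    have hkey := congrFun (congrFun (key p.1 q.1) p.2) q.2
    have h1 : (E' * Eneg * B') p q = (NormedSpace.exp ((c p.1 * h) • K) * Eneg *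
        (b q.1 • (NormedSpace.exp (((1 - c q.1) * h) • K) * F q.1))) p.2 q.2 := by
      simp only [Matrix.mul_apply]
      simp only [Matrix.mul_apply, hE', hB']
    rw [h1, hkey]
    simp only [hS, Matrix.smul_apply, smul_eq_mul]
  -- L4
  have L4 : (Matrix.diagonal (fun p : Fin s × Fin n => b p.1)) * (W + h • S)
      = (1 + h • M2) * (Matrix.diagonal (fun p : Fin s × Fin n => b p.1)) := by
    ext p q
    rw [Matrix.diagonal_mul, Matrix.mul_diagonal]
    simp only [Matrix.add_apply, Matrix.sub_apply, Matrix.smul_apply]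
    simp only [hW, hS, hM1, hM2, Mblk, hX, Matrix.add_apply, Matrix.sub_apply,
      Matrix.smul_apply, Matrix.one_apply, smul_eq_mul, Matrix.transpose_apply]
    have hsp := hsymp p.1 q.1
    by_cases hpq : p = q
    · subst hpq
      simp only [eq_self_iff_true, if_true]
      linear_combination (-(h * ((NormedSpace.exp (((c p.1 - c p.1) * h) • K) * F p.1) p.2 p.2))) * hsp
    · simp only [if_neg hpq]
      linear_combination (-(h * ((NormedSpace.exp (((c p.1 - c q.1) * h) • K) * F q.1) p.2 q.2))) * hsp
  -- determinant bookkeeping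
  have hdetW : IsUnit W.det := (Matrix.isUnit_iff_isUnit_det W).mp hinv
  have hWne : W.det ≠ 0 := hdetW.ne_zero
  letI : Invertible W := W.invertibleOfIsUnitDet hdetW
  have hJ'W : J' = W⁻¹ * E' := by rw [← L1, Matrix.inv_mul_cancel_left_of_invertible]
  have hPE : P * Eneg = 1 := by
    rw [hP, hEneg, neg_one_mul]
    exact expinv K h
  have cancel : ∀ Z : Matrix (Fin n) (Fin n) ℝ, P * (Eneg * Z) = Z := by
    intro Z
    rw [← Matrix.mul_assoc, hPE, Matrix.one_mul]
  have step1 : jac φ y = P * (1 + h • (Eneg * (B' * (W⁻¹ * E')))) := by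
    rw [L2, hJ'W, Matrix.mul_add, Matrix.mul_one, Matrix.mul_smul, cancel]
  have step2 : (1 : Matrix (Fin n) (Fin n) ℝ) + h • (Eneg * (B' * (W⁻¹ * E'))) =
      1 + (h • (Eneg * B' * W⁻¹)) * E' := by
    rw [Matrix.smul_mul]
    congr 2
    rw [Matrix.mul_assoc, Matrix.mul_assoc]
  have step3 : ((1 : Matrix (Fin n) (Fin n) ℝ) + (h • (Eneg * B' * W⁻¹)) * E').det
      = ((1 : Matrix (Fin s × Fin n) (Fin s × Fin n) ℝ) + E' * (h • (Eneg * B' * W⁻¹))).det :=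
    Matrix.det_one_add_mul_comm _ _
  have step4 : (1 : Matrix (Fin s × Fin n) (Fin s × Fin n) ℝ) + E' * (h • (Eneg * B' * W⁻¹))
      = (W + h • S) * W⁻¹ := by
    rw [Matrix.add_mul, Matrix.mul_inv_of_invertible, Matrix.smul_mul, ← L3]
    congr 2
    rw [Matrix.mul_smul, ← Matrix.mul_assoc, ← Matrix.mul_assoc]
  have step5 : (W + h • S).det = ((1 : Matrix (Fin s × Fin n) (Fin s × Fin n) ℝ) + h • M2).det := by
    have hd := congrArg Matrix.det L4
    rw [Matrix.det_mul, Matrix.det_mul] at hd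
    have hdiag : (Matrix.diagonal (fun p : Fin s × Fin n => b p.1)).det ≠ 0 := by
      rw [Matrix.det_diagonal]
      exact Finset.prod_ne_zero_iff.mpr fun p _ => hb p.1
    rw [mul_comm] at hd
    exact mul_right_cancel₀ hdiag hd
  have detphi : (jac φ y).det = P.det * (((1 : Matrix (Fin s × Fin n) (Fin s × Fin n) ℝ) + h • M2).det * W.det⁻¹) := by
    rw [step1, Matrix.det_mul, step2, step3, step4, Matrix.det_mul, Matrix.det_nonsing_inv,
      step5, Ring.inverse_eq_inv']
  rw [detphi, ← mul_assoc, mul_inv_eq_one₀ hWne, eq_comm]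
end

section
/- (key identity in the proof of Lemma 3.2) If (A,b) is symplectic with b_i ≠ 0 for all i, then for all real n×n matrices F_1,…,F_s, det(I_{sn} − h·N) = det(I_{sn} + h·M(Aᵀ;F)), where N is the (s·n)×(s·n) block matrix whose (i,j) block is (a_{ij} − b_j)·exp((c_i−c_j)·h·K)·F_j. -/
open Matrix

/-- **Key identity in the proof of Lemma 3.2.** -/
theorem stmt_3 (n s : ℕ) (h : ℝ) (K : Matrix (Fin n) (Fin n) ℝ) (c : Fin s → ℝ)
    (A : Matrix (Fin s) (Fin s) ℝ) (b : Fin s → ℝ)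
    (hsymp : IsSymplecticRK A b) (hb : ∀ i, b i ≠ 0)
    (F : Fin s → Matrix (Fin n) (Fin n) ℝ)
    (N : Matrix (Fin s × Fin n) (Fin s × Fin n) ℝ)
    (hN : ∀ p q, N p q =
      (A p.1 q.1 - b q.1) * (NormedSpace.exp (((c p.1 - c q.1) * h) • K) * F q.1) p.2 q.2) :
    ((1 : Matrix (Fin s × Fin n) (Fin s × Fin n) ℝ) - h • N).det =
      ((1 : Matrix (Fin s × Fin n) (Fin s × Fin n) ℝ) + h • Mblk h K c Aᵀ F).det := by
  set D : Matrix (Fin s × Fin n) (Fin s × Fin n) ℝ :=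
    Matrix.diagonal (fun p => (b p.1)⁻¹) with hD
  have hDdet : D.det ≠ 0 := by
    rw [hD, Matrix.det_diagonal]
    exact Finset.prod_ne_zero_iff.mpr (fun p _ => inv_ne_zero (hb p.1))
  have key : ((1 : Matrix (Fin s × Fin n) (Fin s × Fin n) ℝ) - h • N) * D
      = D * ((1 : Matrix (Fin s × Fin n) (Fin s × Fin n) ℝ) + h • Mblk h K c Aᵀ F) := by
    ext p q
    simp only [hD, Matrix.mul_diagonal, Matrix.diagonal_mul, Matrix.sub_apply,
      Matrix.add_apply, Matrix.smul_apply, Matrix.one_apply, hN p q, Mblk,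
      Matrix.transpose_apply, smul_eq_mul]
    have hs := hsymp p.1 q.1
    have hbp := hb p.1
    have hbq := hb q.1
    set E := (NormedSpace.exp (((c p.1 - c q.1) * h) • K) * F q.1) p.2 q.2 with hE
    by_cases hpq : p = q
    · subst hpq
      simp only [if_pos rfl]
      have h2 : 2 * A p.1 p.1 = b p.1 := by
        rcases mul_eq_zero.mp (by ring_nf; linarith [hs] : b p.1 * (2 * A p.1 p.1 - b p.1) = 0) with h3 | h3
        · exact absurd h3 hbp
        · linarith
      linear_combination (-(h * E) * (b p.1)⁻¹) * h2
    · simp only [if_neg hpq]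
      field_simp
      linear_combination (-(h * E)) * hs
  have := congrArg Matrix.det key
  rw [Matrix.det_mul, Matrix.det_mul] at this
  have h2 : D.det * ((1 : Matrix (Fin s × Fin n) (Fin s × Fin n) ℝ) - h • N).det
      = D.det * ((1 : Matrix (Fin s × Fin n) (Fin s × Fin n) ℝ) + h • Mblk h K c Aᵀ F).det := by
    linarith [this]
  exact mul_left_cancel₀ hDdet h2
end

section
/- (Theorem 4.1, algebraic form) Suppose P is an invertible real n×n matrix with P·K·P^{−1} = −Kᵀ, and F_1,…,F_s are real n×n matrices with P·F_i·P^{−1} = −F_iᵀ for all i. Then for every real s×s matrix A, the VP condition holds: det(I_{sn} − h·M(A;F)) = det(exp(h·K))·det(I_{sn} + h·M(Aᵀ;F)). -/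
open Matrix

namespace VPaux

variable {n s : ℕ}

/-- block matrix with blocks `A i j • (u i * v j)` -/
def mk (A : Matrix (Fin s) (Fin s) ℝ) (u v : Fin s → Matrix (Fin n) (Fin n) ℝ) :
    Matrix (Fin s × Fin n) (Fin s × Fin n) ℝ :=
  fun p q => A p.1 q.1 * (u p.1 * v q.1) p.2 q.2

/-- block diagonal with blocks `w i` -/
def bd (w : Fin s → Matrix (Fin n) (Fin n) ℝ) :
    Matrix (Fin s × Fin n) (Fin s × Fin n) ℝ :=
  fun p q => if p.1 = q.1 then w p.1 p.2 q.2 else 0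

lemma mk_smul (r : ℝ) (A : Matrix (Fin s) (Fin s) ℝ) (u v : Fin s → Matrix (Fin n) (Fin n) ℝ) :
    mk (r • A) u v = r • mk A u v := by
  ext p q; simp [mk, Matrix.smul_apply]; ring

lemma mk_neg (A : Matrix (Fin s) (Fin s) ℝ) (u v : Fin s → Matrix (Fin n) (Fin n) ℝ) :
    mk (-A) u v = -(mk A u v) := by
  ext p q; simp [mk]

lemma bd_mul_bd (w w' : Fin s → Matrix (Fin n) (Fin n) ℝ) :
    bd w * bd w' = bd (fun i => w i * w' i) := by
  ext ⟨i, p⟩ ⟨j, q⟩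
  simp only [bd, Matrix.mul_apply, Fintype.sum_prod_type, ite_mul, mul_ite, zero_mul, mul_zero,
    Finset.sum_ite_irrel, Finset.sum_const_zero, Finset.sum_ite_eq, Finset.sum_ite_eq',
    Finset.mem_univ, if_true]
  by_cases hij : i = j <;> simp [hij]

lemma bd_one : bd (fun _ : Fin s => (1 : Matrix (Fin n) (Fin n) ℝ)) = 1 := by
  ext ⟨i, p⟩ ⟨j, q⟩
  simp [bd, Matrix.one_apply, Prod.ext_iff, ite_and]

lemma bd_mul_mk (w : Fin s → Matrix (Fin n) (Fin n) ℝ) (A : Matrix (Fin s) (Fin s) ℝ)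
    (u v : Fin s → Matrix (Fin n) (Fin n) ℝ) :
    bd w * mk A u v = mk A (fun i => w i * u i) v := by
  ext ⟨i, p⟩ ⟨j, q⟩
  simp only [bd, mk, Matrix.mul_apply, Fintype.sum_prod_type, ite_mul, mul_ite, zero_mul, mul_zero,
    Finset.sum_ite_irrel, Finset.sum_const_zero, Finset.sum_ite_eq, Finset.sum_ite_eq',
    Finset.mem_univ, if_true]
  simp only [Finset.sum_mul, Finset.mul_sum]
  rw [Finset.sum_comm]
  exact Finset.sum_congr rfl fun a _ => Finset.sum_congr rfl fun b _ => by ring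

lemma mk_mul_bd (A : Matrix (Fin s) (Fin s) ℝ) (u v w : Fin s → Matrix (Fin n) (Fin n) ℝ) :
    mk A u v * bd w = mk A u (fun j => v j * w j) := by
  ext ⟨i, p⟩ ⟨j, q⟩
  simp only [bd, mk, Matrix.mul_apply, Fintype.sum_prod_type, ite_mul, mul_ite, zero_mul, mul_zero,
    Finset.sum_ite_irrel, Finset.sum_const_zero, Finset.sum_ite_eq, Finset.sum_ite_eq',
    Finset.mem_univ, if_true]
  simp only [Finset.sum_mul, Finset.mul_sum]
  rw [Finset.sum_comm]
  exact Finset.sum_congr rfl fun a _ => Finset.sum_congr rfl fun b _ => by ring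

lemma mk_transpose (A : Matrix (Fin s) (Fin s) ℝ) (u v : Fin s → Matrix (Fin n) (Fin n) ℝ) :
    (mk A u v)ᵀ = mk Aᵀ (fun i => (v i)ᵀ) (fun j => (u j)ᵀ) := by
  ext ⟨i, p⟩ ⟨j, q⟩
  simp [mk, ← Matrix.transpose_mul]

lemma det_one_add_mk (A : Matrix (Fin s) (Fin s) ℝ) (u v : Fin s → Matrix (Fin n) (Fin n) ℝ) :
    (1 + mk A u v).det = (1 + mk A 1 (fun j => v j * u j)).det := by
  have h1 : mk A u v = bd u * mk A (1 : Fin s → Matrix (Fin n) (Fin n) ℝ) v := by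
    rw [bd_mul_mk]; simp [Pi.one_def]
  have h2 : mk A (1 : Fin s → Matrix (Fin n) (Fin n) ℝ) v * bd u
      = mk A 1 (fun j => v j * u j) := mk_mul_bd _ _ _ _
  rw [h1, Matrix.det_one_add_mul_comm, h2]


lemma mk_neg_right (A : Matrix (Fin s) (Fin s) ℝ) (u v : Fin s → Matrix (Fin n) (Fin n) ℝ) :
    mk A u (fun j => -(v j)) = mk (-A) u v := by
  ext p q; simp [mk, Matrix.mul_neg]

end VPaux

open VPaux

/-- **Theorem 4.1, algebraic form.** If `P` conjugates `K` and each `F_i` to the negative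
of its transpose, then the VP condition holds for every `A`. -/
theorem stmt_6 (n s : ℕ) (h : ℝ) (K : Matrix (Fin n) (Fin n) ℝ) (c : Fin s → ℝ)
    (P : Matrix (Fin n) (Fin n) ℝ) (hP : IsUnit P)
    (hK : P * K * P⁻¹ = -Kᵀ)
    (F : Fin s → Matrix (Fin n) (Fin n) ℝ)
    (hF : ∀ i, P * F i * P⁻¹ = -(F i)ᵀ) :
    ∀ A : Matrix (Fin s) (Fin s) ℝ,
      ((1 : Matrix (Fin s × Fin n) (Fin s × Fin n) ℝ) - h • Mblk h K c A F).det =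
        (NormedSpace.exp (h • K)).det *
          ((1 : Matrix (Fin s × Fin n) (Fin s × Fin n) ℝ) + h • Mblk h K c Aᵀ F).det := by
  intro A
  have hdP : IsUnit P.det := (Matrix.isUnit_iff_isUnit_det P).mp hP
  have hPP : P * P⁻¹ = 1 := Matrix.mul_nonsing_inv P hdP
  have hPP' : P⁻¹ * P = 1 := Matrix.nonsing_inv_mul P hdP
  have hcomm : ∀ x y : ℝ, Commute (x • K) (y • K) := fun x y =>
    ((Commute.refl K).smul_left x).smul_right y
  -- det of conjugated matrices equals det
  have hdetconj : ∀ M : Matrix (Fin n) (Fin n) ℝ, (P * M * P⁻¹).det = M.det := by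
    intro M
    rw [Matrix.det_mul, Matrix.det_mul]
    have h1 : P.det * P⁻¹.det = 1 := by rw [← Matrix.det_mul, hPP, Matrix.det_one]
    calc P.det * M.det * P⁻¹.det = M.det * (P.det * P⁻¹.det) := by ring
      _ = M.det := by rw [h1, mul_one]
  -- conjugation of exponentials
  have hconjexp : ∀ x : ℝ, P * NormedSpace.exp (x • K) * P⁻¹
      = (NormedSpace.exp ((-x) • K))ᵀ := by
    intro x
    rw [← Matrix.exp_conj P (x • K) hP]
    have : P * (x • K) * P⁻¹ = ((-x) • K)ᵀ := by
      rw [Matrix.mul_smul, Matrix.smul_mul, hK]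
      rw [Matrix.transpose_smul]
      rw [smul_neg, ← neg_smul]
    rw [this, Matrix.exp_transpose]
  set E : Fin s → Matrix (Fin n) (Fin n) ℝ := fun i => NormedSpace.exp ((c i * h) • K) with hE
  set E' : Fin s → Matrix (Fin n) (Fin n) ℝ :=
    fun i => NormedSpace.exp ((-(c i * h)) • K) with hE'
  set W : Fin s → Matrix (Fin n) (Fin n) ℝ := fun j => E' j * F j with hW
  set G : Fin s → Matrix (Fin n) (Fin n) ℝ := fun j => W j * E j with hG
  -- Mblk as mk
  have hexp : ∀ i j, NormedSpace.exp (((c i - c j) * h) • K)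
      = NormedSpace.exp ((c i * h) • K) * NormedSpace.exp ((-(c j * h)) • K) := by
    intro i j
    rw [← Matrix.exp_add_of_commute _ _ (hcomm _ _), ← add_smul]
    have : (c i - c j) * h = c i * h + -(c j * h) := by ring
    rw [this]
  have hMblk : ∀ B : Matrix (Fin s) (Fin s) ℝ, Mblk h K c B F = mk B E W := by
    intro B
    ext ⟨i, p⟩ ⟨j, q⟩
    simp only [Mblk, mk, hE, hE', hW, hexp, Matrix.mul_assoc]
  -- conjugation of G
  have hGconj : ∀ j, P * G j * P⁻¹ = -(G j)ᵀ := by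
    intro j
    have hmid : ∀ X : Matrix (Fin n) (Fin n) ℝ, P⁻¹ * (P * X) = X := fun X => by
      rw [← Matrix.mul_assoc, hPP', Matrix.one_mul]
    have e1 : P * G j * P⁻¹ = (P * E' j * P⁻¹) * (P * F j * P⁻¹) * (P * E j * P⁻¹) := by
      simp only [hG, hW, Matrix.mul_assoc, hmid]
    have e2 : P * E' j * P⁻¹ = (E j)ᵀ := by
      rw [hE', hconjexp, neg_neg]
    have e3 : P * E j * P⁻¹ = (E' j)ᵀ := hconjexp _
    rw [e1, e2, e3, hF j]
    rw [hG, hW, Matrix.transpose_mul, Matrix.transpose_mul]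
    simp [Matrix.mul_assoc]
  -- determinant of exp is 1
  have hdet1 : (NormedSpace.exp (h • K)).det = 1 := by
    set d : ℝ := (NormedSpace.exp (h • K)).det with hd
    have hsq : NormedSpace.exp (h • K)
        = NormedSpace.exp ((h/2) • K) * NormedSpace.exp ((h/2) • K) := by
      rw [← Matrix.exp_add_of_commute _ _ (hcomm _ _), ← add_smul, add_halves]
    have hd0 : 0 ≤ d := by
      rw [hd, hsq, Matrix.det_mul]
      exact mul_self_nonneg _
    have hinv : NormedSpace.exp (h • K) * NormedSpace.exp ((-h) • K) = 1 := by
      rw [← Matrix.exp_add_of_commute _ _ (hcomm _ _), ← add_smul]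
      have : h + -h = 0 := by ring
      rw [this, zero_smul, NormedSpace.exp_zero]
    have hcj : d = (NormedSpace.exp ((-h) • K)).det := by
      rw [hd, ← hdetconj (NormedSpace.exp (h • K)), hconjexp, Matrix.det_transpose]
    have hdd : d * d = 1 := by
      nth_rewrite 2 [hcj]
      rw [hd, ← Matrix.det_mul, hinv, Matrix.det_one]
    have hfac : (d - 1) * (d + 1) = 0 := by linear_combination hdd
    rcases mul_eq_zero.mp hfac with h1 | h1
    · linarith
    · linarith
  rw [hdet1, one_mul, hMblk, hMblk]
  have step1 : (1 : Matrix (Fin s × Fin n) (Fin s × Fin n) ℝ) - h • mk A E W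
      = 1 + mk ((-h) • A) E W := by
    rw [mk_smul, neg_smul, sub_eq_add_neg]
  have step8 : (1 : Matrix (Fin s × Fin n) (Fin s × Fin n) ℝ) + h • mk Aᵀ E W
      = 1 + mk (h • Aᵀ) E W := by rw [mk_smul]
  rw [step1, step8, det_one_add_mk ((-h) • A) E W, det_one_add_mk (h • Aᵀ) E W, ← hG]
  set Q := bd (fun _ : Fin s => P) with hQ
  set Q' := bd (fun _ : Fin s => P⁻¹) with hQ'
  have hQQ' : Q * Q' = 1 := by
    rw [hQ, hQ', bd_mul_bd]
    simp only [hPP]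
    exact bd_one
  have hdet2 : (Q * (1 + mk ((-h) • A) 1 G) * Q').det = (1 + mk ((-h) • A) 1 G).det := by
    rw [Matrix.det_mul, Matrix.det_mul]
    have h1 : Q.det * Q'.det = 1 := by rw [← Matrix.det_mul, hQQ', Matrix.det_one]
    calc Q.det * (1 + mk ((-h) • A) 1 G).det * Q'.det
        = (1 + mk ((-h) • A) 1 G).det * (Q.det * Q'.det) := by ring
      _ = (1 + mk ((-h) • A) 1 G).det := by rw [h1, mul_one]
  have hconjmk : Q * (1 + mk ((-h) • A) 1 G) * Q'
      = 1 + mk (h • A) 1 (fun j => (G j)ᵀ) := by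
    rw [Matrix.mul_add, Matrix.mul_one, Matrix.add_mul, hQQ']
    congr 1
    rw [hQ, hQ', bd_mul_mk, mk_mul_bd]
    ext ⟨i, p⟩ ⟨j, q⟩
    simp only [mk, Pi.one_apply, Matrix.mul_one]
    rw [← Matrix.mul_assoc, hGconj j]
    simp only [Matrix.one_mul, Matrix.neg_apply, Matrix.smul_apply, smul_eq_mul]
    ring
  rw [← hdet2, hconjmk]
  rw [← Matrix.det_transpose (1 + mk (h • A) 1 fun j => (G j)ᵀ)]
  rw [Matrix.transpose_add, Matrix.transpose_one, mk_transpose]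
  have htr : mk (h • A)ᵀ (fun i => ((G i)ᵀ)ᵀ)
        (fun j => ((1 : Fin s → Matrix (Fin n) (Fin n) ℝ) j)ᵀ)
      = mk (h • Aᵀ) G 1 := by
    ext ⟨i, p⟩ ⟨j, q⟩
    simp [mk, Matrix.transpose_smul]
  rw [htr, det_one_add_mk (h • Aᵀ) G 1]
  congr 1
  ext ⟨i, p⟩ ⟨j, q⟩
  simp [mk]
end

section
/- (Theorem 4.2, two-stage case, algebraic form) Let s = 2 and suppose c_1 = c_2. Suppose P is an invertible real n×n matrix with P·K·P^{−1} = −K, and F_1, F_2 are real n×n matrices with P·F_i·P^{−1} = −F_i for i = 1,2. Then det(exp(h·K)) = 1 and for every real 2×2 matrix A the VP condition holds: det(I_{2n} − h·M(A;F)) = det(exp(h·K))·det(I_{2n} + h·M(Aᵀ;F)). -/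
open Matrix

/-- The obvious equivalence between `Fin n ⊕ Fin n` and `Fin 2 × Fin n`. -/
def sumEquivAux (n : ℕ) : (Fin n ⊕ Fin n) ≃ (Fin 2 × Fin n) where
  toFun := Sum.elim (fun i => ((0 : Fin 2), i)) (fun i => ((1 : Fin 2), i))
  invFun p := if p.1 = 0 then Sum.inl p.2 else Sum.inr p.2
  left_inv x := by cases x <;> simp
  right_inv p := by
    rcases p with ⟨a, i⟩
    fin_cases a <;> simp

/-- Cancel an invertible matrix in a determinant intertwining relation. -/
lemma det_eq_of_conj {m : Type*} [Fintype m] [DecidableEq m]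
    (T X Y : Matrix m m ℝ) (hT : T.det ≠ 0) (hXY : T * X = Y * T) : X.det = Y.det := by
  have h1 := congrArg Matrix.det hXY
  rw [Matrix.det_mul, Matrix.det_mul, mul_comm Y.det T.det] at h1
  exact mul_left_cancel₀ hT h1

/-- Swapping the two off-diagonal scalar coefficients doesn't change the determinant. -/
lemma swap_det {n : ℕ} (F0 F1 : Matrix (Fin n) (Fin n) ℝ) (α β γ δ : ℝ) :
    (fromBlocks (1 + α • F0) (β • F1) (γ • F0) (1 + δ • F1)).det =
      (fromBlocks (1 + α • F0) (γ • F1) (β • F0) (1 + δ • F1)).det := by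
  by_cases hβ : β = 0
  · subst hβ
    by_cases hγ : γ = 0
    · subst hγ; rfl
    · simp only [zero_smul]
      rw [Matrix.det_fromBlocks_zero₁₂, Matrix.det_fromBlocks_zero₂₁]
  · by_cases hγ : γ = 0
    · subst hγ
      simp only [zero_smul]
      rw [Matrix.det_fromBlocks_zero₂₁, Matrix.det_fromBlocks_zero₁₂]
    · set t : ℝ := γ / β with ht
      have htβ : t * β = γ := div_mul_cancel₀ γ hβ
      have htne : t ≠ 0 := div_ne_zero hγ hβ
      set T : Matrix (Fin n ⊕ Fin n) (Fin n ⊕ Fin n) ℝ :=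
        fromBlocks (t • (1 : Matrix (Fin n) (Fin n) ℝ)) 0 0 1 with hT
      have hdetT : T.det ≠ 0 := by
        rw [hT, Matrix.det_fromBlocks_zero₂₁, Matrix.det_smul]
        simpa using pow_ne_zero (Fintype.card (Fin n)) htne
      refine det_eq_of_conj T _ _ hdetT ?_
      rw [hT, fromBlocks_multiply, fromBlocks_multiply]
      congr 1 <;>
        simp [Matrix.smul_mul, Matrix.mul_smul, smul_smul, htβ]
      · rw [mul_comm β t, htβ]

/-- Key lemma: the sign-flip plus swap identity for 2×2 block matrices. -/
lemma main_det_lemma {n : ℕ} (F0 F1 P : Matrix (Fin n) (Fin n) ℝ)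
    (hPd : P.det ≠ 0) (h0 : P * F0 = -(F0 * P)) (h1 : P * F1 = -(F1 * P)) (α β γ δ : ℝ) :
    (fromBlocks (1 + (-α) • F0) ((-β) • F1) ((-γ) • F0) (1 + (-δ) • F1)).det =
      (fromBlocks (1 + α • F0) (γ • F1) (β • F0) (1 + δ • F1)).det := by
  have step1 :
      (fromBlocks (1 + (-α) • F0) ((-β) • F1) ((-γ) • F0) (1 + (-δ) • F1)).det =
        (fromBlocks (1 + α • F0) (β • F1) (γ • F0) (1 + δ • F1)).det := by
    set Q : Matrix (Fin n ⊕ Fin n) (Fin n ⊕ Fin n) ℝ := fromBlocks P 0 0 P with hQdef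
    have hdetQ : Q.det ≠ 0 := by
      rw [hQdef, Matrix.det_fromBlocks_zero₂₁]
      exact mul_ne_zero hPd hPd
    refine det_eq_of_conj Q _ _ hdetQ ?_
    have e11 : P * (1 + (-α) • F0) = (1 + α • F0) * P := by
      rw [Matrix.mul_add, Matrix.add_mul, Matrix.mul_smul, Matrix.smul_mul, h0]
      simp
    have e12 : P * ((-β) • F1) = (β • F1) * P := by
      rw [Matrix.mul_smul, Matrix.smul_mul, h1]
      simp
    have e21 : P * ((-γ) • F0) = (γ • F0) * P := by
      rw [Matrix.mul_smul, Matrix.smul_mul, h0]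
      simp
    have e22 : P * (1 + (-δ) • F1) = (1 + δ • F1) * P := by
      rw [Matrix.mul_add, Matrix.add_mul, Matrix.mul_smul, Matrix.smul_mul, h1]
      simp
    rw [hQdef, fromBlocks_multiply, fromBlocks_multiply]
    simp only [Matrix.zero_mul, Matrix.mul_zero, add_zero, zero_add, e11, e12, e21, e22]
  rw [step1]
  exact swap_det F0 F1 α β γ δ

/-- **Theorem 4.2, two-stage case, algebraic form.** -/
theorem stmt_9 (n : ℕ) (h : ℝ) (K : Matrix (Fin n) (Fin n) ℝ) (c : Fin 2 → ℝ)
    (hc : c 0 = c 1)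
    (P : Matrix (Fin n) (Fin n) ℝ) (hP : IsUnit P)
    (hK : P * K * P⁻¹ = -K)
    (F : Fin 2 → Matrix (Fin n) (Fin n) ℝ)
    (hF : ∀ i, P * F i * P⁻¹ = -(F i)) :
    (NormedSpace.exp (h • K)).det = 1 ∧
      ∀ A : Matrix (Fin 2) (Fin 2) ℝ,
        ((1 : Matrix (Fin 2 × Fin n) (Fin 2 × Fin n) ℝ) - h • Mblk h K c A F).det =
          (NormedSpace.exp (h • K)).det *
            ((1 : Matrix (Fin 2 × Fin n) (Fin 2 × Fin n) ℝ) + h • Mblk h K c Aᵀ F).det := by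
  have hPd : IsUnit P.det := (Matrix.isUnit_iff_isUnit_det P).mp hP
  have hPdne : P.det ≠ 0 := hPd.ne_zero
  have hPinvP : P⁻¹ * P = 1 := Matrix.nonsing_inv_mul P hPd
  -- from conjugation hypotheses, derive anti-commutation
  have hmulP : ∀ (X : Matrix (Fin n) (Fin n) ℝ),
      P * X * P⁻¹ = -X → P * X = -(X * P) := by
    intro X hX
    have := congrArg (· * P) hX
    simpa [Matrix.mul_assoc, hPinvP, Matrix.neg_mul] using this
  have hKc : P * K = -(K * P) := hmulP K hK
  have hFc : ∀ i, P * F i = -(F i * P) := fun i => hmulP (F i) (hF i)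
  -- Part 1 : det (exp (h • K)) = 1
  have hconj : P * (h • K) * P⁻¹ = -(h • K) := by
    rw [Matrix.mul_smul, Matrix.smul_mul, hK, smul_neg]
  have e1 : NormedSpace.exp (-(h • K)) = P * NormedSpace.exp (h • K) * P⁻¹ := by
    rw [← hconj, Matrix.exp_conj _ _ hP]
  set d : ℝ := (NormedSpace.exp (h • K)).det with hd
  have hdetconj : (NormedSpace.exp (-(h • K))).det = d := by
    rw [e1, Matrix.det_mul, Matrix.det_mul, Matrix.det_nonsing_inv, hd, Ring.inverse_eq_inv']
    field_simp
  have hmulinv : NormedSpace.exp (-(h • K)) * NormedSpace.exp (h • K) = 1 := by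
    rw [← Matrix.exp_add_of_commute _ _ (Commute.neg_left (Commute.refl (h • K)))]
    simp
  have hsq : d * d = 1 := by
    have := congrArg Matrix.det hmulinv
    rwa [Matrix.det_mul, Matrix.det_one, hdetconj] at this
  have hdpos : 0 ≤ d := by
    have hhalf : (h / 2) • K + (h / 2) • K = h • K := by
      rw [← add_smul]; norm_num
    have hsqexp : NormedSpace.exp (h • K) =
        NormedSpace.exp ((h / 2) • K) * NormedSpace.exp ((h / 2) • K) := by
      rw [← Matrix.exp_add_of_commute _ _ (Commute.refl _), hhalf]
    have : d = (NormedSpace.exp ((h / 2) • K)).det * (NormedSpace.exp ((h / 2) • K)).det := by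
      rw [hd, hsqexp, Matrix.det_mul]
    rw [this]
    exact mul_self_nonneg _
  have hdet1 : d = 1 := by
    have hfac : (d - 1) * (d + 1) = 0 := by ring_nf; linarith [hsq]
    rcases mul_eq_zero.mp hfac with h' | h'
    · linarith
    · linarith
  refine ⟨hdet1, fun A => ?_⟩
  rw [hdet1, one_mul]
  -- simplify Mblk using c 0 = c 1
  have hcc : ∀ i j : Fin 2, c i - c j = 0 := by
    intro i j
    fin_cases i <;> fin_cases j <;> simp [hc]
  have hM : ∀ B : Matrix (Fin 2) (Fin 2) ℝ,
      Mblk h K c B F = fun p q => B p.1 q.1 * F q.1 p.2 q.2 := by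
    intro B
    funext p q
    simp [Mblk, hcc p.1 q.1, NormedSpace.exp_zero]
  -- transfer to block matrices over a sum type
  set e := sumEquivAux n with he
  have key : ∀ (B : Matrix (Fin 2) (Fin 2) ℝ) (s : ℝ),
      ((1 : Matrix (Fin 2 × Fin n) (Fin 2 × Fin n) ℝ) + s • Mblk h K c B F).submatrix e e =
        fromBlocks (1 + (s * B 0 0) • F 0) ((s * B 0 1) • F 1)
          ((s * B 1 0) • F 0) (1 + (s * B 1 1) • F 1) := by
    intro B s
    ext i j
    rcases i with i | i <;> rcases j with j | j <;>
      simp [hM B, he, sumEquivAux, Matrix.one_apply, Prod.ext_iff, mul_assoc, Matrix.smul_apply, smul_eq_mul] <;> rfl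
  have hminus : (1 : Matrix (Fin 2 × Fin n) (Fin 2 × Fin n) ℝ) - h • Mblk h K c A F =
      1 + (-h) • Mblk h K c A F := by
    rw [sub_eq_add_neg, neg_smul]
  rw [hminus, ← Matrix.det_submatrix_equiv_self e, ← Matrix.det_submatrix_equiv_self e,
    key A (-h), key Aᵀ h]
  simp only [Matrix.transpose_apply, neg_mul]
  exact main_det_lemma (F 0) (F 1) P hPdne (hFc 0) (hFc 1) (h * A 0 0) (h * A 0 1) (h * A 1 0)
    (h * A 1 1)
end

section
/- (Theorem 4.2) Let s = 2 and c_1 = c_2. Suppose (A,b) is symplectic with b_1 ≠ 0 and b_2 ≠ 0, and there exists an invertible real n×n matrix P with P·K·P^{−1} = −K and P·Dg(y)·P^{−1} = −Dg(y) for all y ∈ ℝ^n. Then at every point y ∈ ℝ^n where I_{2n} − h·Ā·F(y) is invertible, the special symplectic exponential integrator satisfies det(Dφ_h(y)) = 1; that is, it preserves volume for vector fields of class 𝓢. -/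
open Matrix

lemma hasFDerivAt_mulVec {n : ℕ} (M : Matrix (Fin n) (Fin n) ℝ) (y : Fin n → ℝ) :
    HasFDerivAt (fun z : Fin n → ℝ => M.mulVec z)
      (LinearMap.toContinuousLinearMap M.mulVecLin) y :=
  (LinearMap.toContinuousLinearMap M.mulVecLin).hasFDerivAt

lemma toMatrix'_mulVecLin {n : ℕ} (M : Matrix (Fin n) (Fin n) ℝ) :
    LinearMap.toMatrix' M.mulVecLin = M := by
  rw [← Matrix.toLin'_apply', LinearMap.toMatrix'_toLin']

lemma jac_shape {n : ℕ} (h : ℝ) (M : Matrix (Fin n) (Fin n) ℝ)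
    (C : Fin 2 → Matrix (Fin n) (Fin n) ℝ) (w : Fin 2 → (Fin n → ℝ) → (Fin n → ℝ))
    (hw : ∀ j, Differentiable ℝ (w j)) (y : Fin n → ℝ) :
    jac (fun z => M.mulVec z + h • ∑ j, (C j).mulVec (w j z)) y
      = M + h • ∑ j, C j * jac (w j) y := by
  have hterm : ∀ j : Fin 2, HasFDerivAt (fun z => (C j).mulVec (w j z))
      ((LinearMap.toContinuousLinearMap (C j).mulVecLin).comp (fderiv ℝ (w j) y)) y :=
    fun j => (hasFDerivAt_mulVec (C j) (w j y)).comp y (hw j y).hasFDerivAt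
  have H : HasFDerivAt (fun z => M.mulVec z + h • ∑ j, (C j).mulVec (w j z))
      (LinearMap.toContinuousLinearMap M.mulVecLin
        + h • ∑ j, (LinearMap.toContinuousLinearMap (C j).mulVecLin).comp (fderiv ℝ (w j) y)) y :=
    (hasFDerivAt_mulVec M y).add ((HasFDerivAt.fun_sum (fun j _ => hterm j)).const_smul h)
  rw [jac, H.fderiv]
  simp only [ContinuousLinearMap.coe_add, ContinuousLinearMap.coe_smul,
    ContinuousLinearMap.coe_sum, ContinuousLinearMap.coe_comp,
    LinearMap.coe_toContinuousLinearMap, map_add, _root_.map_smul, _root_.map_sum,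
    LinearMap.toMatrix'_comp, toMatrix'_mulVecLin, jac]
  congr 2

lemma jac_comp_s10 {n : ℕ} (f u : (Fin n → ℝ) → (Fin n → ℝ))
    (hf : Differentiable ℝ f) (hu : Differentiable ℝ u) (y : Fin n → ℝ) :
    jac (fun z => f (u z)) y = jac f (u y) * jac u y := by
  have H : HasFDerivAt (fun z => f (u z))
      ((fderiv ℝ f (u y)).comp (fderiv ℝ u y)) y :=
    (hf (u y)).hasFDerivAt.comp y (hu y).hasFDerivAt
  rw [jac, H.fderiv]
  simp only [ContinuousLinearMap.coe_comp, LinearMap.toMatrix'_comp, jac]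
  exact LinearMap.toMatrix'_comp _ _

lemma fromBlocks_sub' {n : ℕ} (A B C D A' B' C' D' : Matrix (Fin n) (Fin n) ℝ) :
    (fromBlocks A B C D) - (fromBlocks A' B' C' D') =
      fromBlocks (A - A') (B - B') (C - C') (D - D') := by
  rw [sub_eq_add_neg, fromBlocks_neg, fromBlocks_add]
  simp [sub_eq_add_neg]

lemma det_smul_offdiag {n : ℕ} (X W B C : Matrix (Fin n) (Fin n) ℝ) (t : ℝ) (ht : t ≠ 0) :
    (fromBlocks X (t • B) C W).det = (fromBlocks X B (t • C) W).det := by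
  have key : (fromBlocks (t • (1 : Matrix (Fin n) (Fin n) ℝ)) 0 0 1) * fromBlocks X B (t • C) W
      = fromBlocks X (t • B) C W * (fromBlocks (t • (1 : Matrix (Fin n) (Fin n) ℝ)) 0 0 1) := by
    simp only [fromBlocks_multiply]
    simp [Matrix.smul_mul, Matrix.mul_smul]
  have hdet : (fromBlocks (t • (1 : Matrix (Fin n) (Fin n) ℝ)) 0 0 (1 : Matrix (Fin n) (Fin n) ℝ)).det = t ^ n := by
    rw [det_fromBlocks_zero₂₁]
    simp [Matrix.det_smul]
  have := congrArg Matrix.det key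
  rw [det_mul, det_mul, hdet] at this
  have htn : (t : ℝ) ^ n ≠ 0 := pow_ne_zero _ ht
  exact (mul_left_cancel₀ htn (this.trans (mul_comm _ _))).symm

lemma det_coeff_prod {n : ℕ} (X W B C : Matrix (Fin n) (Fin n) ℝ) (α β : ℝ) :
    (fromBlocks X (α • B) (β • C) W).det = (fromBlocks X B ((α * β) • C) W).det := by
  by_cases hα : α = 0
  · subst hα
    rw [zero_smul, zero_mul, zero_smul, det_fromBlocks_zero₁₂, det_fromBlocks_zero₂₁]
  · rw [det_smul_offdiag X W B (β • C) α hα, smul_smul]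

lemma det_coeff_eq {n : ℕ} (X W B C : Matrix (Fin n) (Fin n) ℝ) (α β γ δ : ℝ)
    (hprod : α * β = γ * δ) :
    (fromBlocks X (α • B) (β • C) W).det = (fromBlocks X (γ • B) (δ • C) W).det := by
  rw [det_coeff_prod, det_coeff_prod, hprod]

lemma fromRows_sub' {n : ℕ} (a b c d : Matrix (Fin n) (Fin n) ℝ) :
    (fromRows a b : Matrix (Fin n ⊕ Fin n) (Fin n) ℝ) - fromRows c d
      = fromRows (a - c) (b - d) := by
  ext (i | i) j <;> simp [Matrix.sub_apply]

set_option maxHeartbeats 1000000 in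
lemma core {n : ℕ} (Y M : Fin 2 → Matrix (Fin n) (Fin n) ℝ)
    (A : Matrix (Fin 2) (Fin 2) ℝ) (b : Fin 2 → ℝ)
    (hsymp : ∀ i j, b i * A i j + b j * A j i - b i * b j = 0)
    (hb : ∀ i, b i ≠ 0)
    (P : Matrix (Fin n) (Fin n) ℝ) (hP : IsUnit P)
    (hPY : ∀ i, P * Y i = -(Y i * P))
    (hM : ∀ i, M i = 1 + ∑ j, A i j • (Y j * M j))
    (hdet : (1 - fromBlocks (A 0 0 • Y 0) (A 0 1 • Y 1) (A 1 0 • Y 0) (A 1 1 • Y 1) :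
        Matrix (Fin n ⊕ Fin n) (Fin n ⊕ Fin n) ℝ).det ≠ 0) :
    (1 + ∑ i, b i • (Y i * M i)).det = 1 := by
  set As : Matrix (Fin n ⊕ Fin n) (Fin n ⊕ Fin n) ℝ :=
    fromBlocks (A 0 0 • 1) (A 0 1 • 1) (A 1 0 • 1) (A 1 1 • 1) with hAs
  set Ys : Matrix (Fin n ⊕ Fin n) (Fin n ⊕ Fin n) ℝ :=
    fromBlocks (Y 0) 0 0 (Y 1) with hYs
  set Mc : Matrix (Fin n ⊕ Fin n) (Fin n) ℝ := fromRows (M 0) (M 1) with hMcdef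
  set R : Matrix (Fin n) (Fin n ⊕ Fin n) ℝ := fromCols (b 0 • 1) (b 1 • 1) with hR
  set Oc : Matrix (Fin n ⊕ Fin n) (Fin n) ℝ := fromRows 1 1 with hOc
  have hAsYs : As * Ys = fromBlocks (A 0 0 • Y 0) (A 0 1 • Y 1) (A 1 0 • Y 0) (A 1 1 • Y 1) := by
    rw [hAs, hYs, fromBlocks_multiply]
    simp [Matrix.smul_mul]
  have e0 : M 0 - 1 = A 0 0 • (Y 0 * M 0) + A 0 1 • (Y 1 * M 1) := by
    conv_lhs => rw [hM 0, Fin.sum_univ_two]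
    abel
  have e1 : M 1 - 1 = A 1 0 • (Y 0 * M 0) + A 1 1 • (Y 1 * M 1) := by
    conv_lhs => rw [hM 1, Fin.sum_univ_two]
    abel
  have hMc2 : (As * Ys) * Mc = Mc - Oc := by
    rw [hAsYs, hMcdef, fromBlocks_mul_fromRows, hOc, fromRows_sub', fromRows_ext_iff]
    exact ⟨by rw [e0]; simp [Matrix.smul_mul], by rw [e1]; simp [Matrix.smul_mul]⟩
  have hNMc : (1 - As * Ys) * Mc = Oc := by
    rw [Matrix.sub_mul, Matrix.one_mul, hMc2]
    abel
  have hYsMc : Ys * Mc = fromRows (Y 0 * M 0) (Y 1 * M 1) := by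
    rw [hYs, hMcdef, fromBlocks_mul_fromRows]
    simp
  have hW : (1 + ∑ i, b i • (Y i * M i)) = 1 + R * (Ys * Mc) := by
    rw [hYsMc, hR, fromCols_mul_fromRows, Fin.sum_univ_two]
    simp [Matrix.smul_mul]
  have hOcR : Oc * R = fromBlocks (b 0 • 1) (b 1 • 1) (b 0 • 1) (b 1 • 1) := by
    rw [hOc, hR, fromRows_mul_fromCols]
    simp
  have key : (1 - Ys * As) * (1 + Ys * (Mc * R)) = 1 - Ys * (As - Oc * R) := by
    have h1 : As * (Ys * (Mc * R)) = Mc * R - Oc * R := by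
      have h2 := congrArg (fun X => X * R) hNMc
      simp only [Matrix.sub_mul, Matrix.one_mul, Matrix.mul_assoc] at h2
      rw [← h2]
      abel
    rw [Matrix.mul_add, Matrix.mul_one, Matrix.sub_mul, Matrix.one_mul,
      Matrix.mul_assoc Ys As (Ys * (Mc * R)), h1, Matrix.mul_sub, Matrix.mul_sub]
    abel
  have hdet1 : (1 - As * Ys).det = (1 - Ys * As).det := by
    simpa [mul_neg, neg_mul, ← sub_eq_add_neg] using Matrix.det_one_add_mul_comm As (-Ys)
  have hdetNe : (1 - As * Ys).det ≠ 0 := by rwa [hAsYs]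
  have detW_eq : (1 + ∑ i, b i • (Y i * M i)).det = (1 + Ys * (Mc * R)).det := by
    rw [hW, Matrix.det_one_add_mul_comm, Matrix.mul_assoc]
  have main : (1 - As * Ys).det * (1 + ∑ i, b i • (Y i * M i)).det
      = (1 - Ys * (As - Oc * R)).det := by
    rw [detW_eq, hdet1, ← det_mul, key]
  have hYsCs : Ys * (As - Oc * R) = fromBlocks ((A 0 0 - b 0) • Y 0) ((A 0 1 - b 1) • Y 0)
      ((A 1 0 - b 0) • Y 1) ((A 1 1 - b 1) • Y 1) := by
    rw [hOcR, hAs]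
    rw [show (fromBlocks (A 0 0 • 1) (A 0 1 • 1) (A 1 0 • 1) (A 1 1 • 1) :
        Matrix (Fin n ⊕ Fin n) (Fin n ⊕ Fin n) ℝ)
        - fromBlocks (b 0 • 1) (b 1 • 1) (b 0 • 1) (b 1 • 1)
      = fromBlocks ((A 0 0 - b 0) • 1) ((A 0 1 - b 1) • 1) ((A 1 0 - b 0) • 1)
          ((A 1 1 - b 1) • 1) from by
        rw [fromBlocks_sub']
        simp [sub_smul]]
    rw [hYs, fromBlocks_multiply]
    simp [Matrix.mul_smul]
  have e2 : (1 : Matrix (Fin n ⊕ Fin n) (Fin n ⊕ Fin n) ℝ) - Ys * (As - Oc * R)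
      = fromBlocks (1 - (A 0 0 - b 0) • Y 0) (-((A 0 1 - b 1) • Y 0))
          (-((A 1 0 - b 0) • Y 1)) (1 - (A 1 1 - b 1) • Y 1) := by
    rw [hYsCs, ← fromBlocks_one, fromBlocks_sub']
    simp
  have e3 : (1 : Matrix (Fin n ⊕ Fin n) (Fin n ⊕ Fin n) ℝ) + Ys * (As - Oc * R)
      = fromBlocks (1 + (A 0 0 - b 0) • Y 0) ((A 0 1 - b 1) • Y 0)
          ((A 1 0 - b 0) • Y 1) (1 + (A 1 1 - b 1) • Y 1) := by
    rw [hYsCs, ← fromBlocks_one, fromBlocks_add]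
    simp
  have hPconj : ∀ (s : ℝ) (i : Fin 2), P * (s • Y i) = -((s • Y i) * P) := by
    intro s i
    rw [Matrix.mul_smul, hPY i, Matrix.smul_mul, smul_neg]
  have hPb : (fromBlocks P 0 0 P) * (1 - Ys * (As - Oc * R))
      = (1 + Ys * (As - Oc * R)) * (fromBlocks P 0 0 P) := by
    rw [e2, e3, fromBlocks_multiply, fromBlocks_multiply, fromBlocks_inj]
    refine ⟨?_, ?_, ?_, ?_⟩ <;>
      simp [Matrix.mul_sub, Matrix.sub_mul, Matrix.mul_add, Matrix.add_mul, hPconj,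
        sub_eq_add_neg]
  have hPbdet : (fromBlocks P 0 0 P : Matrix (Fin n ⊕ Fin n) (Fin n ⊕ Fin n) ℝ).det ≠ 0 := by
    rw [det_fromBlocks_zero₂₁]
    have hdP : IsUnit P.det := (Matrix.isUnit_iff_isUnit_det P).mp hP
    exact mul_ne_zero hdP.ne_zero hdP.ne_zero
  have hflip : (1 - Ys * (As - Oc * R)).det = (1 + Ys * (As - Oc * R)).det := by
    have h4 := congrArg Matrix.det hPb
    rw [det_mul, det_mul] at h4
    exact mul_left_cancel₀ hPbdet (h4.trans (mul_comm _ _))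
  have h00 : A 0 0 - b 0 = -(A 0 0) := by
    have hs := hsymp 0 0
    have h5 : b 0 * (A 0 0 + A 0 0 - b 0) = 0 := by linear_combination hs
    rcases mul_eq_zero.mp h5 with h | h
    · exact absurd h (hb 0)
    · linarith
  have h11 : A 1 1 - b 1 = -(A 1 1) := by
    have hs := hsymp 1 1
    have h5 : b 1 * (A 1 1 + A 1 1 - b 1) = 0 := by linear_combination hs
    rcases mul_eq_zero.mp h5 with h | h
    · exact absurd h (hb 1)
    · linarith
  have hoffprod : (A 0 1 - b 1) * (A 1 0 - b 0) = (-(A 0 1)) * (-(A 1 0)) := by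
    linear_combination -(hsymp 0 1)
  have hscal : (1 + Ys * (As - Oc * R)).det = (1 - Ys * As).det := by
    rw [e3, h00, h11]
    have hYsAs : Ys * As = fromBlocks (A 0 0 • Y 0) (A 0 1 • Y 0) (A 1 0 • Y 1) (A 1 1 • Y 1) := by
      rw [hYs, hAs, fromBlocks_multiply]
      simp [Matrix.mul_smul]
    have target : (1 : Matrix (Fin n ⊕ Fin n) (Fin n ⊕ Fin n) ℝ) - Ys * As
        = fromBlocks (1 + (-(A 0 0)) • Y 0) ((-(A 0 1)) • Y 0)
            ((-(A 1 0)) • Y 1) (1 + (-(A 1 1)) • Y 1) := by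
      rw [hYsAs, ← fromBlocks_one, fromBlocks_sub']
      simp [sub_eq_add_neg, neg_smul]
    rw [target]
    exact det_coeff_eq _ _ _ _ _ _ _ _ hoffprod
  have final : (1 - As * Ys).det * (1 + ∑ i, b i • (Y i * M i)).det
      = (1 - As * Ys).det * 1 := by
    rw [main, hflip, hscal, ← hdet1, mul_one]
  exact mul_left_cancel₀ hdetNe final


set_option maxHeartbeats 1000000 in
/-- **Theorem 4.2.** Two-stage special symplectic exponential integrators with
`c₁ = c₂` preserve volume for vector fields of class `𝓢`. -/
theorem stmt_10 (n : ℕ) (h : ℝ) (K : Matrix (Fin n) (Fin n) ℝ) (c : Fin 2 → ℝ)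
    (hc : c 0 = c 1)
    (g : (Fin n → ℝ) → (Fin n → ℝ)) (hg : Differentiable ℝ g)
    (A : Matrix (Fin 2) (Fin 2) ℝ) (b : Fin 2 → ℝ)
    (hsymp : IsSymplecticRK A b) (hb : ∀ i, b i ≠ 0)
    (P : Matrix (Fin n) (Fin n) ℝ) (hP : IsUnit P)
    (hK : P * K * P⁻¹ = -K)
    (hgS : ∀ y, P * jac g y * P⁻¹ = -(jac g y))
    (k : Fin 2 → (Fin n → ℝ) → (Fin n → ℝ))
    (hk : ∀ i, Differentiable ℝ (k i))
    (hkdef : ∀ i y, k i y =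
      (NormedSpace.exp ((c i * h) • K)).mulVec y +
        h • ∑ j, (A i j • NormedSpace.exp (((c i - c j) * h) • K)).mulVec (g (k j y)))
    (φ : (Fin n → ℝ) → (Fin n → ℝ))
    (hφ : ∀ y, φ y =
      (NormedSpace.exp (h • K)).mulVec y +
        h • ∑ i, (b i • NormedSpace.exp (((1 - c i) * h) • K)).mulVec (g (k i y)))
    (F : (Fin n → ℝ) → Matrix (Fin 2 × Fin n) (Fin 2 × Fin n) ℝ)
    (hF : ∀ y p q, F y p q = if p.1 = q.1 then jac g (k p.1 y) p.2 q.2 else 0)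
    (Ablk : Matrix (Fin 2 × Fin n) (Fin 2 × Fin n) ℝ)
    (hAblk : ∀ p q, Ablk p q =
      A p.1 q.1 * NormedSpace.exp (((c p.1 - c q.1) * h) • K) p.2 q.2) :
    ∀ y : Fin n → ℝ,
      IsUnit ((1 : Matrix (Fin 2 × Fin n) (Fin 2 × Fin n) ℝ) - h • (Ablk * F y)) →
        (jac φ y).det = 1 := by
  intro y hy
  have hcc : ∀ i : Fin 2, c i = c 0 := by
    intro i; fin_cases i
    · rfl
    · exact hc.symm
  have hPdetu : IsUnit P.det := (Matrix.isUnit_iff_isUnit_det P).mp hP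
  -- matrix exponential facts
  have hcomm : ∀ a b : ℝ, Commute (a • K) (b • K) :=
    fun a b => ((Commute.refl K).smul_left a).smul_right b
  have hmulexp : ∀ a b : ℝ, NormedSpace.exp (a • K) * NormedSpace.exp (b • K)
      = NormedSpace.exp ((a + b) • K) := by
    intro a b
    rw [add_smul, Matrix.exp_add_of_commute (a • K) (b • K) (hcomm a b)]
  set G : Fin 2 → Matrix (Fin n) (Fin n) ℝ := fun i => jac g (k i y) with hG
  set L : Fin 2 → Matrix (Fin n) (Fin n) ℝ := fun i => jac (k i) y with hLdef
  set Ec : Matrix (Fin n) (Fin n) ℝ := NormedSpace.exp ((c 0 * h) • K) with hEc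
  set EcInv : Matrix (Fin n) (Fin n) ℝ := NormedSpace.exp ((-(c 0 * h)) • K) with hEcInv
  set Ed : Matrix (Fin n) (Fin n) ℝ := NormedSpace.exp (((1 - c 0) * h) • K) with hEd
  have hEcEcInv : Ec * EcInv = 1 := by
    rw [hEc, hEcInv, hmulexp]
    simp [NormedSpace.exp_zero]
  have hEcInvEc : EcInv * Ec = 1 := by
    rw [hEc, hEcInv, hmulexp]
    simp [NormedSpace.exp_zero]
  have hEdEc : Ed * Ec = NormedSpace.exp (h • K) := by
    rw [hEd, hEc, hmulexp]
    ring_nf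
  -- det of exp(h•K) is 1
  have hdetE : (NormedSpace.exp (h • K)).det = 1 := by
    have h1 : NormedSpace.exp ((h/2) • K) * NormedSpace.exp ((h/2) • K)
        = NormedSpace.exp (h • K) := by
      rw [hmulexp]; ring_nf
    have hKP : P * (h • K) * P⁻¹ = -(h • K) := by
      rw [Matrix.mul_smul, Matrix.smul_mul, hK, smul_neg]
    have hconj := Matrix.exp_conj P (h • K) hP
    rw [hKP] at hconj
    have hdetneg : (NormedSpace.exp (-(h • K))).det = (NormedSpace.exp (h • K)).det := by
      rw [hconj, Matrix.det_mul, Matrix.det_mul, Matrix.det_nonsing_inv, Ring.inverse_eq_inv']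
      field_simp [hPdetu.ne_zero]
    have hmul1 : (NormedSpace.exp (h • K)).det * (NormedSpace.exp (-(h • K))).det = 1 := by
      rw [← Matrix.det_mul, show -(h • K) = (-h) • K from (neg_smul h K).symm, hmulexp]
      simp [NormedSpace.exp_zero]
    rw [hdetneg] at hmul1
    have hs := Matrix.det_mul (NormedSpace.exp ((h/2) • K)) (NormedSpace.exp ((h/2) • K))
    rw [h1] at hs
    nlinarith [sq_nonneg ((NormedSpace.exp ((h/2) • K)).det)]
  -- zero exponent simplification
  have hexp0 : ∀ i j : Fin 2, NormedSpace.exp (((c i - c j) * h) • K)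
      = (1 : Matrix (Fin n) (Fin n) ℝ) := by
    intro i j
    rw [hcc i, hcc j, sub_self, zero_mul, zero_smul, NormedSpace.exp_zero]
  -- jacobians of compositions
  have hcompjac : ∀ j : Fin 2, jac (fun z => g (k j z)) y = G j * L j :=
    fun j => jac_comp_s10 g (k j) hg (hk j) y
  have hL : ∀ i, L i = Ec + ∑ j, A i j • ((h • G j) * L j) := by
    intro i
    have hk_eq : k i = fun z => (NormedSpace.exp ((c i * h) • K)).mulVec z +
        h • ∑ j, (A i j • NormedSpace.exp (((c i - c j) * h) • K)).mulVec (g (k j z)) :=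
      funext (hkdef i)
    have step : L i = NormedSpace.exp ((c i * h) • K)
        + h • ∑ j, (A i j • NormedSpace.exp (((c i - c j) * h) • K)) * (G j * L j) := by
      show jac (k i) y = _
      rw [hk_eq, jac_shape h (NormedSpace.exp ((c i * h) • K))
        (fun j => A i j • NormedSpace.exp (((c i - c j) * h) • K))
        (fun j z => g (k j z)) (fun j => (hg.comp (hk j) : )) y]
      simp only [hcompjac]
    rw [step, hcc i, ← hEc]
    congr 1
    rw [Finset.smul_sum]
    apply Finset.sum_congr rfl
    intro j _
    rw [hexp0, Matrix.smul_mul, Matrix.one_mul, Matrix.smul_mul, smul_comm]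
  have hjacφ : jac φ y = NormedSpace.exp (h • K) + h • ∑ i, (b i • Ed) * (G i * L i) := by
    have hφ_eq : φ = fun z => (NormedSpace.exp (h • K)).mulVec z +
        h • ∑ i, (b i • NormedSpace.exp (((1 - c i) * h) • K)).mulVec (g (k i z)) :=
      funext hφ
    rw [hφ_eq, jac_shape h (NormedSpace.exp (h • K))
      (fun i => b i • NormedSpace.exp (((1 - c i) * h) • K))
      (fun i z => g (k i z)) (fun i => (hg.comp (hk i) : )) y]
    congr 2
    apply Finset.sum_congr rfl
    intro i _
    rw [hcompjac, hcc i, ← hEd]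
  set M : Fin 2 → Matrix (Fin n) (Fin n) ℝ := fun i => L i * EcInv with hMdef
  have hMEc : ∀ i, M i * Ec = L i := by
    intro i
    show L i * EcInv * Ec = L i
    rw [Matrix.mul_assoc, hEcInvEc, Matrix.mul_one]
  have hM : ∀ i, M i = 1 + ∑ j, A i j • ((h • G j) * M j) := by
    intro i
    show L i * EcInv = _
    conv_lhs => rw [hL i]
    rw [Matrix.add_mul, hEcEcInv, Finset.sum_mul]
    congr 1
    apply Finset.sum_congr rfl
    intro j _
    rw [Matrix.smul_mul, Matrix.mul_assoc]
  have hfact : jac φ y = Ed * ((1 + ∑ i, b i • ((h • G i) * M i)) * Ec) := by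
    rw [hjacφ, Matrix.add_mul, Matrix.one_mul, Matrix.mul_add, ← hEdEc]
    congr 1
    rw [Finset.sum_mul, Finset.mul_sum, Finset.smul_sum]
    apply Finset.sum_congr rfl
    intro i _
    simp only [Matrix.smul_mul, Matrix.mul_smul, Matrix.mul_assoc, hMEc, smul_smul]
    rw [mul_comm]
  -- transport the invertibility hypothesis
  have hAF : ∀ p q : Fin 2 × Fin n, (Ablk * F y) p q
      = A p.1 q.1 * jac g (k q.1 y) p.2 q.2 := by
    intro p q
    rw [Matrix.mul_apply]
    have hterm : ∀ r : Fin 2 × Fin n, Ablk p r * F y r q =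
        (A p.1 r.1 * (if p.2 = r.2 then (1:ℝ) else 0)) *
          (if r.1 = q.1 then jac g (k r.1 y) r.2 q.2 else 0) := by
      intro r
      rw [hAblk, hF y, hexp0]
      simp [Matrix.one_apply]
    rw [Finset.sum_congr rfl (fun r _ => hterm r), Fintype.sum_prod_type]
    simp [mul_ite, ite_mul, zero_mul, mul_zero, Finset.sum_ite_eq, Finset.sum_ite_eq']
  let e : (Fin n ⊕ Fin n) ≃ (Fin 2 × Fin n) :=
    ⟨Sum.elim (fun i => ((0 : Fin 2), i)) (fun i => ((1 : Fin 2), i)),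
     fun p => if p.1 = 0 then Sum.inl p.2 else Sum.inr p.2,
     by rintro (i | i) <;> simp,
     by rintro ⟨i, j⟩; fin_cases i <;> simp⟩
  have hsubm : ((1 : Matrix (Fin n ⊕ Fin n) (Fin n ⊕ Fin n) ℝ)
      - fromBlocks (A 0 0 • (h • G 0)) (A 0 1 • (h • G 1))
          (A 1 0 • (h • G 0)) (A 1 1 • (h • G 1)))
      = ((1 : Matrix (Fin 2 × Fin n) (Fin 2 × Fin n) ℝ) - h • (Ablk * F y)).submatrix e e := by
    ext p q
    rcases p with i | i <;> rcases q with j | j <;>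
      simp [e, Matrix.submatrix_apply, Matrix.sub_apply, Matrix.smul_apply, hAF, hG,
        Matrix.one_apply, Prod.ext_iff] <;> ring
  have hdetcore : ((1 : Matrix (Fin n ⊕ Fin n) (Fin n ⊕ Fin n) ℝ)
      - fromBlocks (A 0 0 • (h • G 0)) (A 0 1 • (h • G 1))
          (A 1 0 • (h • G 0)) (A 1 1 • (h • G 1))).det ≠ 0 := by
    rw [hsubm, Matrix.det_submatrix_equiv_self]
    exact ((Matrix.isUnit_iff_isUnit_det _).mp hy).ne_zero
  have hPG : ∀ z, P * jac g z = -(jac g z * P) := by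
    intro z
    have h2 := congrArg (fun X => X * P) (hgS z)
    simp only [Matrix.mul_assoc, Matrix.nonsing_inv_mul P hPdetu, Matrix.mul_one, neg_mul] at h2
    simpa [Matrix.mul_assoc] using h2
  have hPY : ∀ i : Fin 2, P * (h • G i) = -((h • G i) * P) := by
    intro i
    rw [Matrix.mul_smul, Matrix.smul_mul, ← smul_neg]
    congr 1
    rw [hG]
    exact hPG (k i y)
  have hWdet := core (fun i => h • G i) M A b (fun i j => hsymp i j) hb P hP hPY hM hdetcore
  have hdetfact : (jac φ y).det = (1 + ∑ i, b i • ((h • G i) * M i)).det := by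
    rw [hfact, Matrix.det_mul, Matrix.det_mul]
    have h9 : Ed.det * Ec.det = 1 := by rw [← Matrix.det_mul, hEdEc, hdetE]
    calc Ed.det * ((1 + ∑ i, b i • ((h • G i) * M i)).det * Ec.det)
        = (Ed.det * Ec.det) * (1 + ∑ i, b i • ((h • G i) * M i)).det := by ring
      _ = (1 + ∑ i, b i • ((h • G i) * M i)).det := by rw [h9, one_mul]
  rw [hdetfact]
  simpa using hWdet
end

section
/- (Section 5.1, algebraic form) Let J be an invertible skew-symmetric real n×n matrix, M a symmetric real n×n matrix, and S_1,…,S_s symmetric real n×n matrices. Set K = J^{−1}·M and F_i = J^{−1}·S_i for i = 1,…,s. Then J·K·J^{−1} = −Kᵀ and J·F_i·J^{−1} = −F_iᵀ for all i, and consequently the VP condition holds for every real s×s matrix A: det(I_{sn} − h·M(A;F)) = det(exp(h·K))·det(I_{sn} + h·M(Aᵀ;F)). -/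
open Matrix

namespace VPaux

open NormedSpace

variable {n s : ℕ}

local notation "Mat" => Matrix (Fin n) (Fin n) ℝ
local notation "BMat" => Matrix (Fin s) (Fin s) (Matrix (Fin n) (Fin n) ℝ)

lemma expsmul_mul (K : Matrix (Fin n) (Fin n) ℝ) (a b : ℝ) :
    exp (a • K) * exp (b • K) = exp ((a + b) • K) := by
  rw [add_smul, Matrix.exp_add_of_commute]
  exact ((Commute.refl K).smul_left a).smul_right b

lemma expsmul_inv (K : Matrix (Fin n) (Fin n) ℝ) (a : ℝ) :
    exp (a • K) * exp ((-a) • K) = 1 := by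
  rw [expsmul_mul, add_neg_cancel, zero_smul, exp_zero]

noncomputable def NrB (A : Matrix (Fin s) (Fin s) ℝ) (G : Fin s → Mat) : BMat :=
  Matrix.of fun i j => A i j • G j

noncomputable def NlB (A : Matrix (Fin s) (Fin s) ℝ) (G : Fin s → Mat) : BMat :=
  Matrix.of fun i j => A i j • G i

noncomputable def KrB (A : Matrix (Fin s) (Fin s) ℝ) : BMat :=
  Matrix.of fun i j => A i j • (1 : Mat)

lemma diag_mul_KrB (A : Matrix (Fin s) (Fin s) ℝ) (G : Fin s → Mat) :
    Matrix.diagonal G * KrB A = NlB A G := by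
  ext i j; rw [NlB, KrB, Matrix.diagonal_mul]; simp [mul_smul_comm]

lemma KrB_mul_diag (A : Matrix (Fin s) (Fin s) ℝ) (G : Fin s → Mat) :
    KrB A * Matrix.diagonal G = NrB A G := by
  ext i j; rw [NrB, KrB, Matrix.mul_diagonal]; simp [smul_mul_assoc]

lemma det_conj_aux {m : Type*} [Fintype m] [DecidableEq m] (U X V : Matrix m m ℝ)
    (hUV : U * V = 1) : (U * X * V).det = X.det := by
  have h1 : U.det * V.det = 1 := by rw [← det_mul, hUV, det_one]
  rw [det_mul, det_mul]
  calc U.det * X.det * V.det = X.det * (U.det * V.det) := by ring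
    _ = X.det := by rw [h1, mul_one]

lemma det_conj_diag (D D' : Fin s → Mat) (hDD' : ∀ i, D i * D' i = 1) (X : BMat) :
    (Matrix.compRingEquiv (Fin s) (Fin n) ℝ (Matrix.diagonal D * X * Matrix.diagonal D')).det
      = (Matrix.compRingEquiv (Fin s) (Fin n) ℝ X).det := by
  rw [_root_.map_mul, _root_.map_mul]
  apply det_conj_aux
  rw [← _root_.map_mul, diagonal_mul_diagonal]
  have : (fun i => D i * D' i) = fun _ => (1 : Mat) := funext hDD'
  rw [this, diagonal_one, _root_.map_one]

lemma eB_transpose (X : BMat) :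
    (Matrix.compRingEquiv (Fin s) (Fin n) ℝ X)ᵀ
      = Matrix.compRingEquiv (Fin s) (Fin n) ℝ (Matrix.of fun i j => (X j i)ᵀ) := by
  ext ⟨i,p⟩ ⟨j,q⟩
  simp [Matrix.compRingEquiv, Matrix.compAddEquiv, Matrix.comp]
  rfl

/-- Central determinant identity. -/
lemma central (hh : ℝ) (G : Fin s → Mat) (Jm J' : Mat)
    (hJ'J : J' * Jm = 1)
    (hG : ∀ i, J' * (G i)ᵀ * Jm = -(G i)) (A : Matrix (Fin s) (Fin s) ℝ) :
    ((1 : Matrix (Fin s × Fin n) (Fin s × Fin n) ℝ)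
        - hh • Matrix.compRingEquiv (Fin s) (Fin n) ℝ (NrB A G)).det
      = ((1 : Matrix (Fin s × Fin n) (Fin s × Fin n) ℝ)
        + hh • Matrix.compRingEquiv (Fin s) (Fin n) ℝ (NrB Aᵀ G)).det := by
  set e := Matrix.compRingEquiv (Fin s) (Fin n) ℝ with he
  have e_smul : ∀ (r : ℝ) (X : BMat), e (r • X) = r • e X := fun r X => rfl
  have h1' : (Matrix.of fun i j => ((1 - hh • NrB A G) j i)ᵀ)
      = (1 : BMat) - hh • NlB Aᵀ (fun i => (G i)ᵀ) := by
    ext i j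
    simp only [Matrix.of_apply, Matrix.sub_apply, Matrix.smul_apply, NrB, NlB,
      Matrix.transpose_sub, Matrix.transpose_smul, Matrix.transpose_apply]
    congr 1
    · by_cases hij : i = j
      · subst hij; simp [Matrix.one_apply, eq_comm]
      · simp [Matrix.one_apply, hij, Ne.symm hij]
  have h1 : ((1 : Matrix (Fin s × Fin n) (Fin s × Fin n) ℝ) - hh • e (NrB A G)).det
      = (e (1 - hh • NlB Aᵀ (fun i => (G i)ᵀ))).det := by
    rw [← det_transpose, ← _root_.map_one e, ← e_smul, ← _root_.map_sub, eB_transpose, h1']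
  have key : Matrix.diagonal (fun _ => J') * (hh • NlB Aᵀ (fun i => (G i)ᵀ))
        * Matrix.diagonal (fun _ => Jm) = -(hh • NlB Aᵀ G) := by
    ext i j
    rw [Matrix.mul_diagonal, Matrix.diagonal_mul]
    simp only [NlB, Matrix.smul_apply, Matrix.of_apply, Matrix.neg_apply]
    rw [mul_smul_comm, mul_smul_comm, smul_mul_assoc, smul_mul_assoc, hG i, smul_neg, smul_neg]
    simp
  have h2 : (e (1 - hh • NlB Aᵀ (fun i => (G i)ᵀ))).det
      = (e (1 + hh • NlB Aᵀ G)).det := by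
    rw [← det_conj_diag (fun _ => J') (fun _ => Jm) (fun _ => hJ'J)]
    congr 2
    rw [Matrix.mul_sub, Matrix.sub_mul, Matrix.mul_one, diagonal_mul_diagonal, key]
    have hone : (fun _ : Fin s => J' * Jm) = fun _ => (1 : Mat) := funext fun _ => hJ'J
    rw [hone, diagonal_one, sub_neg_eq_add]
  have h3 : (e (1 + hh • NlB Aᵀ G)).det = (e (1 + hh • NrB Aᵀ G)).det := by
    have l1 : (1 : BMat) + hh • NlB Aᵀ G = 1 + (hh • Matrix.diagonal G) * KrB Aᵀ := by
      rw [smul_mul_assoc, diag_mul_KrB]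
    have l2 : (1 : BMat) + hh • NrB Aᵀ G = 1 + KrB Aᵀ * (hh • Matrix.diagonal G) := by
      rw [mul_smul_comm, KrB_mul_diag]
    rw [l1, l2, _root_.map_add, _root_.map_add, _root_.map_one, _root_.map_mul, _root_.map_mul,
      det_one_add_mul_comm]
  rw [h1, h2, h3, _root_.map_add, _root_.map_one, e_smul]

lemma block_entry (h : ℝ) (K : Mat) (c : Fin s → ℝ) (A : Matrix (Fin s) (Fin s) ℝ)
    (F : Fin s → Mat) (i j : Fin s) :
    (Matrix.diagonal (fun i => exp ((c i * h) • K)) *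
      NrB A (fun j => exp ((-(c j * h)) • K) * F j * exp ((c j * h) • K)) *
      Matrix.diagonal (fun j => exp ((-(c j * h)) • K))) i j
    = A i j • (exp (((c i - c j) * h) • K) * F j) := by
  rw [Matrix.mul_diagonal, Matrix.diagonal_mul]
  simp only [NrB, Matrix.of_apply]
  rw [mul_smul_comm, smul_mul_assoc]
  congr 1
  simp only [Matrix.mul_assoc]
  rw [expsmul_inv, Matrix.mul_one, ← Matrix.mul_assoc, expsmul_mul]
  have : c i * h + -(c j * h) = (c i - c j) * h := by ring
  rw [this]

lemma Mblk_eq (h : ℝ) (K : Mat) (c : Fin s → ℝ) (A : Matrix (Fin s) (Fin s) ℝ)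
    (F : Fin s → Mat) :
    Mblk h K c A F = Matrix.compRingEquiv (Fin s) (Fin n) ℝ
      (Matrix.diagonal (fun i => exp ((c i * h) • K)) *
       NrB A (fun j => exp ((-(c j * h)) • K) * F j * exp ((c j * h) • K)) *
       Matrix.diagonal (fun j => exp ((-(c j * h)) • K))) := by
  ext ⟨i,p⟩ ⟨j,q⟩
  have := block_entry h K c A F i j
  calc Mblk h K c A F (i,p) (j,q)
      = (A i j • (exp (((c i - c j) * h) • K) * F j)) p q := rfl
    _ = _ := by
      rw [← this]
      rfl

lemma det_exp_one (J K : Mat) (hJ : IsUnit J) (hKc : J * K * J⁻¹ = -Kᵀ) (h : ℝ) :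
    (exp (h • K)).det = 1 := by
  have hdet := (Matrix.isUnit_iff_isUnit_det J).mp hJ
  have hJJ' : J * J⁻¹ = 1 := Matrix.mul_nonsing_inv J hdet
  have hconj : J * exp (h • K) * J⁻¹ = (exp ((-h) • K))ᵀ := by
    have h1 : J * (h • K) * J⁻¹ = ((-h) • K)ᵀ := by
      rw [Matrix.mul_smul, Matrix.smul_mul, hKc, Matrix.transpose_smul, neg_smul, smul_neg]
    rw [← Matrix.exp_conj J (h • K) hJ, h1, Matrix.exp_transpose]
  have h2 : (exp ((-h) • K)).det = (exp (h • K)).det := by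
    rw [← Matrix.det_transpose, ← hconj, det_conj_aux _ _ _ hJJ']
  have h3 : (exp (h • K)).det * (exp (h • K)).det = 1 := by
    have d := congrArg Matrix.det (expsmul_inv K h)
    rw [Matrix.det_mul, h2, Matrix.det_one] at d
    exact d
  have h4 : 0 ≤ (exp (h • K)).det := by
    have : exp (h • K) = exp ((h/2) • K) * exp ((h/2) • K) := by
      rw [expsmul_mul]; norm_num
    rw [this, Matrix.det_mul]
    exact mul_self_nonneg _
  nlinarith [h3, h4]

end VPaux

/-- **Section 5.1, algebraic form.** For `K = J⁻¹·M` and `F_i = J⁻¹·S_i` with `J`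
invertible skew-symmetric and `M`, `S_i` symmetric, the conjugation relations and the
VP condition hold. -/
theorem stmt_14 (n s : ℕ) (h : ℝ) (c : Fin s → ℝ)
    (J M : Matrix (Fin n) (Fin n) ℝ) (hJ : IsUnit J) (hJskew : Jᵀ = -J)
    (hM : Mᵀ = M)
    (S : Fin s → Matrix (Fin n) (Fin n) ℝ) (hS : ∀ i, (S i)ᵀ = S i)
    (K : Matrix (Fin n) (Fin n) ℝ) (hK : K = J⁻¹ * M)
    (F : Fin s → Matrix (Fin n) (Fin n) ℝ) (hF : ∀ i, F i = J⁻¹ * S i) :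
    (J * K * J⁻¹ = -Kᵀ) ∧ (∀ i, J * F i * J⁻¹ = -(F i)ᵀ) ∧
      ∀ A : Matrix (Fin s) (Fin s) ℝ,
        ((1 : Matrix (Fin s × Fin n) (Fin s × Fin n) ℝ) - h • Mblk h K c A F).det =
          (NormedSpace.exp (h • K)).det *
            ((1 : Matrix (Fin s × Fin n) (Fin s × Fin n) ℝ) + h • Mblk h K c Aᵀ F).det := by
  open VPaux NormedSpace in
  have hdet := (Matrix.isUnit_iff_isUnit_det J).mp hJ
  have hJJ' : J * J⁻¹ = 1 := Matrix.mul_nonsing_inv J hdet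
  have hJ'J : J⁻¹ * J = 1 := Matrix.nonsing_inv_mul J hdet
  have hnegJ : (-J)⁻¹ = -(J⁻¹) := by
    apply Matrix.inv_eq_right_inv
    rw [Matrix.neg_mul, Matrix.mul_neg, neg_neg, hJJ']
  -- generic conjugation fact for X = J⁻¹ * Y with Y symmetric
  have gen : ∀ Y : Matrix (Fin n) (Fin n) ℝ, Yᵀ = Y → J * (J⁻¹ * Y) * J⁻¹ = -(J⁻¹ * Y)ᵀ := by
    intro Y hY
    have ht : (J⁻¹ * Y)ᵀ = -(Y * J⁻¹) := by
      rw [Matrix.transpose_mul, hY, Matrix.transpose_nonsing_inv, hJskew, hnegJ, Matrix.mul_neg]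
    rw [ht, neg_neg, ← Matrix.mul_assoc, hJJ', Matrix.one_mul]
  have hKc : J * K * J⁻¹ = -Kᵀ := by rw [hK]; exact gen M hM
  have hFc : ∀ i, J * F i * J⁻¹ = -(F i)ᵀ := fun i => by rw [hF i]; exact gen (S i) (hS i)
  refine ⟨hKc, hFc, fun A => ?_⟩
  -- exp conjugation
  have hE : ∀ t : ℝ, J * exp (t • K) * J⁻¹ = (exp ((-t) • K))ᵀ := by
    intro t
    have h1 : J * (t • K) * J⁻¹ = ((-t) • K)ᵀ := by
      rw [Matrix.mul_smul, Matrix.smul_mul, hKc, Matrix.transpose_smul, neg_smul, smul_neg]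
    rw [← Matrix.exp_conj J (t • K) hJ, h1, Matrix.exp_transpose]
  set G : Fin s → Matrix (Fin n) (Fin n) ℝ :=
    fun j => exp ((-(c j * h)) • K) * F j * exp ((c j * h) • K) with hGdef
  have hG : ∀ i, J⁻¹ * (G i)ᵀ * J = -(G i) := by
    intro i
    have hJGJ : J * G i * J⁻¹ = -(G i)ᵀ := by
      have e1 : J * G i * J⁻¹
          = (J * exp ((-(c i * h)) • K) * J⁻¹) * (J * F i * J⁻¹)
            * (J * exp ((c i * h) • K) * J⁻¹) := by
        rw [hGdef]
        simp only [Matrix.mul_assoc, Matrix.mul_one]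
        rw [← Matrix.mul_assoc J⁻¹ J, hJ'J, Matrix.one_mul,
          ← Matrix.mul_assoc J⁻¹ J, hJ'J, Matrix.one_mul]
      rw [e1, hE, hE, hFc i, neg_neg]
      rw [hGdef]
      simp only [Matrix.transpose_mul]
      rw [Matrix.mul_neg, Matrix.neg_mul, Matrix.mul_assoc]
    have this2 := congrArg (fun X => J⁻¹ * X * J) hJGJ
    rw [Matrix.mul_neg, Matrix.neg_mul] at this2
    have lhs : J⁻¹ * (J * G i * J⁻¹) * J = G i := by
      simp only [Matrix.mul_assoc]
      rw [hJ'J, Matrix.mul_one, ← Matrix.mul_assoc J⁻¹ J, hJ'J, Matrix.one_mul]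
    rw [lhs] at this2
    exact neg_eq_iff_eq_neg.mp this2.symm
  -- reduce both determinants via conjugation by the exp block diagonal
  have hEE : ∀ i, exp ((c i * h) • K) * exp ((-(c i * h)) • K) = 1 :=
    fun i => expsmul_inv K (c i * h)
  have reduce : ∀ (B : Matrix (Fin s) (Fin s) ℝ) (sgn : ℝ),
      ((1 : Matrix (Fin s × Fin n) (Fin s × Fin n) ℝ) + sgn • Mblk h K c B F).det
        = ((1 : Matrix (Fin s × Fin n) (Fin s × Fin n) ℝ)
            + sgn • Matrix.compRingEquiv (Fin s) (Fin n) ℝ (NrB B G)).det := by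
    intro B sgn
    set e := Matrix.compRingEquiv (Fin s) (Fin n) ℝ with he
    have e_smul : ∀ (r : ℝ) (X : Matrix (Fin s) (Fin s) (Matrix (Fin n) (Fin n) ℝ)),
        e (r • X) = r • e X := fun r X => rfl
    rw [Mblk_eq h K c B F, ← hGdef]
    have : (1 : Matrix (Fin s × Fin n) (Fin s × Fin n) ℝ)
        + sgn • e (Matrix.diagonal (fun i => exp ((c i * h) • K)) * NrB B G
            * Matrix.diagonal (fun j => exp ((-(c j * h)) • K)))
        = e (Matrix.diagonal (fun i => exp ((c i * h) • K)) * (1 + sgn • NrB B G)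
            * Matrix.diagonal (fun j => exp ((-(c j * h)) • K))) := by
      rw [Matrix.mul_add, Matrix.add_mul, Matrix.mul_one, diagonal_mul_diagonal]
      have hone : (fun i => exp ((c i * h) • K) * exp ((-(c i * h)) • K))
          = fun _ => (1 : Matrix (Fin n) (Fin n) ℝ) := funext hEE
      rw [hone, diagonal_one, Matrix.mul_smul, Matrix.smul_mul, _root_.map_add,
        _root_.map_one, e_smul]
    rw [this, det_conj_diag _ _ hEE, _root_.map_add, _root_.map_one, e_smul]
  have hsub : ((1 : Matrix (Fin s × Fin n) (Fin s × Fin n) ℝ) - h • Mblk h K c A F)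
      = 1 + (-h) • Mblk h K c A F := by
    rw [neg_smul, ← sub_eq_add_neg]
  have hdetexp : (exp (h • K)).det = 1 := det_exp_one J K hJ hKc h
  rw [hdetexp, one_mul, hsub, reduce A (-h), reduce Aᵀ h]
  have hsub2 : (1 : Matrix (Fin s × Fin n) (Fin s × Fin n) ℝ)
      + (-h) • (Matrix.compRingEquiv (Fin s) (Fin n) ℝ) (VPaux.NrB A G)
      = 1 - h • (Matrix.compRingEquiv (Fin s) (Fin n) ℝ) (VPaux.NrB A G) := by
    rw [neg_smul, ← sub_eq_add_neg]
  rw [hsub2]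
  exact central h G J J⁻¹ hJ'J hG A
end

section
/- (formula (37)) Let Ω be a real n×n matrix and let K = [[0, I_n],[−Ω, 0]] be the 2n×2n block matrix with zero diagonal blocks, I_n in the upper-right block and −Ω in the lower-left block. Then for every x ∈ ℝ, exp(x·K) = [[φ_0(x²·Ω), x·φ_1(x²·Ω)], [−x·Ω·φ_1(x²·Ω), φ_0(x²·Ω)]]. -/
open Matrix

/-- `φ_i(W) = Σ_{l=0}^∞ ((−1)^l/(2l+i)!)·W^l`. -/
noncomputable def phiFun {n : ℕ} (i : ℕ) (W : Matrix (Fin n) (Fin n) ℝ) :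
    Matrix (Fin n) (Fin n) ℝ :=
  ∑' l : ℕ, (((-1 : ℝ) ^ l / (Nat.factorial (2 * l + i) : ℝ)) • W ^ l)

attribute [local instance] Matrix.linftyOpNormedAddCommGroup Matrix.linftyOpNormedRing
  Matrix.linftyOpNormedAlgebra

private noncomputable def blockDiagMap (n : ℕ) :
    Matrix (Fin n) (Fin n) ℝ →L[ℝ] Matrix (Fin n ⊕ Fin n) (Fin n ⊕ Fin n) ℝ :=
  LinearMap.toContinuousLinearMap
    { toFun := fun M => fromBlocks M 0 0 M
      map_add' := fun A B => by simp [Matrix.fromBlocks_add]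
      map_smul' := fun c A => by simp [Matrix.fromBlocks_smul] }

private noncomputable def blockOffMap {n : ℕ} (Ω : Matrix (Fin n) (Fin n) ℝ) :
    Matrix (Fin n) (Fin n) ℝ →L[ℝ] Matrix (Fin n ⊕ Fin n) (Fin n ⊕ Fin n) ℝ :=
  LinearMap.toContinuousLinearMap
    { toFun := fun M => fromBlocks 0 M (-(Ω * M)) 0
      map_add' := fun A B => by simp [Matrix.fromBlocks_add, mul_add]; abel
      map_smul' := fun c A => by simp [Matrix.fromBlocks_smul, mul_smul_comm] }

private noncomputable def pr11 (n : ℕ) :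
    Matrix (Fin n ⊕ Fin n) (Fin n ⊕ Fin n) ℝ →L[ℝ] Matrix (Fin n) (Fin n) ℝ :=
  LinearMap.toContinuousLinearMap
    { toFun := Matrix.toBlocks₁₁
      map_add' := fun A B => rfl
      map_smul' := fun c A => rfl }

private noncomputable def pr12 (n : ℕ) :
    Matrix (Fin n ⊕ Fin n) (Fin n ⊕ Fin n) ℝ →L[ℝ] Matrix (Fin n) (Fin n) ℝ :=
  LinearMap.toContinuousLinearMap
    { toFun := Matrix.toBlocks₁₂
      map_add' := fun A B => rfl
      map_smul' := fun c A => rfl }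

private lemma Kpow_even {n : ℕ} (Ω : Matrix (Fin n) (Fin n) ℝ) (l : ℕ) :
    (fromBlocks 0 1 (-Ω) 0 : Matrix (Fin n ⊕ Fin n) (Fin n ⊕ Fin n) ℝ) ^ (2 * l) =
      fromBlocks ((-Ω) ^ l) 0 0 ((-Ω) ^ l) := by
  induction l with
  | zero => simp [Matrix.fromBlocks_one]
  | succ l ih =>
      have h2 : 2 * (l + 1) = 2 * l + 1 + 1 := by ring
      rw [h2, pow_succ, pow_succ, ih, Matrix.fromBlocks_multiply,
        Matrix.fromBlocks_multiply]
      have hc : (-Ω) ^ l * (-Ω) = (-Ω) ^ (l + 1) := (pow_succ _ _).symm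
      simp [hc]

private lemma Kpow_odd {n : ℕ} (Ω : Matrix (Fin n) (Fin n) ℝ) (l : ℕ) :
    (fromBlocks 0 1 (-Ω) 0 : Matrix (Fin n ⊕ Fin n) (Fin n ⊕ Fin n) ℝ) ^ (2 * l + 1) =
      fromBlocks 0 ((-Ω) ^ l) (-(Ω * (-Ω) ^ l)) 0 := by
  rw [pow_succ, Kpow_even, Matrix.fromBlocks_multiply]
  have hc : (-Ω) ^ l * (-Ω) = -(Ω * (-Ω) ^ l) := by
    rw [mul_neg, ((Commute.refl Ω).neg_left.pow_left l).eq]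
  simp [hc]

/-- **Formula (37).** The matrix exponential of `x·[[0, I],[−Ω, 0]]` in block form. -/
theorem stmt_15 (n : ℕ) (Ω : Matrix (Fin n) (Fin n) ℝ)
    (K : Matrix (Fin n ⊕ Fin n) (Fin n ⊕ Fin n) ℝ)
    (hK : K = fromBlocks 0 1 (-Ω) 0) :
    ∀ x : ℝ, NormedSpace.exp (x • K) =
      fromBlocks (phiFun 0 (x ^ 2 • Ω)) (x • phiFun 1 (x ^ 2 • Ω))
        (-(x • (Ω * phiFun 1 (x ^ 2 • Ω)))) (phiFun 0 (x ^ 2 • Ω)) := by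
  intro x
  set W : Matrix (Fin n) (Fin n) ℝ := x ^ 2 • Ω with hW
  set f : ℕ → Matrix (Fin n ⊕ Fin n) (Fin n ⊕ Fin n) ℝ :=
    fun k => ((k.factorial : ℝ)⁻¹) • (x • K) ^ k with hf
  set a : ℕ → Matrix (Fin n) (Fin n) ℝ :=
    fun l => ((-1 : ℝ) ^ l / (Nat.factorial (2 * l + 0) : ℝ)) • W ^ l with ha
  set b : ℕ → Matrix (Fin n) (Fin n) ℝ :=
    fun l => ((-1 : ℝ) ^ l / (Nat.factorial (2 * l + 1) : ℝ)) • W ^ l with hb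
  -- term identification, even terms
  have hWp : ∀ l : ℕ, W ^ l = (x ^ 2) ^ l • Ω ^ l := by
    intro l; rw [hW, smul_pow]
  have hNp : ∀ l : ℕ, (-Ω) ^ l = ((-1 : ℝ) ^ l) • Ω ^ l := by
    intro l; rw [← neg_one_smul ℝ Ω, smul_pow]
  have hfe : ∀ l, f (2 * l) = blockDiagMap n (a l) := by
    intro l
    simp only [hf, ha, blockDiagMap, LinearMap.coe_toContinuousLinearMap',
      LinearMap.coe_mk, AddHom.coe_mk, hK, smul_pow, Kpow_even, hWp, hNp]
    rw [Matrix.fromBlocks_smul, Matrix.fromBlocks_smul]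
    simp only [smul_zero, smul_smul]
    congr 2 <;> ring
  have hfo : ∀ l, f (2 * l + 1) = blockOffMap Ω (x • b l) := by
    intro l
    simp only [hf, hb, blockOffMap, LinearMap.coe_toContinuousLinearMap',
      LinearMap.coe_mk, AddHom.coe_mk, hK, smul_pow, Kpow_odd, hWp, hNp]
    rw [Matrix.fromBlocks_smul, Matrix.fromBlocks_smul]
    simp only [smul_zero, smul_smul, mul_neg, neg_smul, mul_smul_comm, smul_neg]
    congr 1
    · congr 1; ring
    · congr 2; ring
  -- summability
  have hsum : Summable f := NormedSpace.expSeries_summable' (𝕂 := ℝ) (x • K)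
  have he : Summable fun l => f (2 * l) :=
    hsum.comp_injective (fun p q h => by omega)
  have ho : Summable fun l => f (2 * l + 1) :=
    hsum.comp_injective (fun p q h => by omega)
  have hsa : Summable a := by
    have h2 := (he.congr hfe).map (pr11 n).toLinearMap.toAddMonoidHom (pr11 n).continuous
    exact h2
  have hsb : Summable fun l => x • b l := by
    have h2 := (ho.congr hfo).map (pr12 n).toLinearMap.toAddMonoidHom (pr12 n).continuous
    exact h2
  -- assemble
  rw [NormedSpace.exp_eq_tsum (𝕂 := ℝ)]
  show (∑' k : ℕ, f k) = _
  rw [← tsum_even_add_odd he ho, tsum_congr hfe, tsum_congr hfo,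
    ← ContinuousLinearMap.map_tsum _ hsa, ← ContinuousLinearMap.map_tsum _ hsb,
    tsum_const_smul'' x]
  have hphi0 : (∑' l, a l) = phiFun 0 W := rfl
  have hphi1 : (∑' l, b l) = phiFun 1 W := rfl
  rw [hphi0, hphi1]
  simp only [blockDiagMap, blockOffMap, LinearMap.coe_toContinuousLinearMap',
    LinearMap.coe_mk, AddHom.coe_mk, mul_smul_comm]
  rw [Matrix.fromBlocks_add]
  simp
end

section
/- (Corollary 5.5) Let Ω be a real n×n matrix, let K = [[0, I_n],[−Ω, 0]] be the 2n×2n block matrix with zero diagonal blocks, I_n in the upper-right block and −Ω in the lower-left block, and let g : ℝ^{2n} → ℝ^{2n} be given by g(q,p) = (0, g̃(q)) for a differentiable map g̃ : ℝ^n → ℝ^n. Let s = 2, c_1 = c_2, and let (A,b) be symplectic with b_1 ≠ 0 and b_2 ≠ 0. Then at every point y ∈ ℝ^{2n} where I_{s·2n} − h·Ā·F(y) is invertible, the special symplectic exponential integrator satisfies det(Dφ_h(y)) = 1; that is, the corresponding two-stage ERKN integrator preserves volume for the separable partitioned system (q,p)' = (p, −Ω·q + g̃(q)). -/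
open Matrix

/-- General Jacobian computation for maps of the shape appearing as stages/update. -/
lemma jac_shape_s16 {ι σ : Type*} [Fintype ι] [DecidableEq ι] [Fintype σ]
    (M : Matrix ι ι ℝ) (N : σ → Matrix ι ι ℝ) (h : ℝ)
    (g : (ι → ℝ) → (ι → ℝ)) (k : σ → (ι → ℝ) → (ι → ℝ))
    (hg : Differentiable ℝ g) (hk : ∀ j, Differentiable ℝ (k j)) (y : ι → ℝ) :
    jac (fun y => M.mulVec y + h • ∑ j, (N j).mulVec (g (k j y))) y
      = M + h • ∑ j, N j * (jac g (k j y) * jac (k j) y) := by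
  have H1 : HasFDerivAt (fun y : ι → ℝ => M.mulVec y)
      (LinearMap.toContinuousLinearMap M.mulVecLin) y := by
    simpa [LinearMap.coe_toContinuousLinearMap'] using
      (LinearMap.toContinuousLinearMap M.mulVecLin).hasFDerivAt
  have H2 : ∀ j, HasFDerivAt (fun y => (N j).mulVec (g (k j y)))
      ((LinearMap.toContinuousLinearMap (N j).mulVecLin).comp
        ((fderiv ℝ g (k j y)).comp (fderiv ℝ (k j) y))) y := by
    intro j
    have hkj := (hk j y).hasFDerivAt
    have hgj := (hg (k j y)).hasFDerivAt
    have := ((LinearMap.toContinuousLinearMap (N j).mulVecLin).hasFDerivAt).comp y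
      (hgj.comp y hkj)
    simpa [Function.comp_def, LinearMap.coe_toContinuousLinearMap'] using this
  have H : HasFDerivAt (fun y => M.mulVec y + h • ∑ j, (N j).mulVec (g (k j y)))
      (LinearMap.toContinuousLinearMap M.mulVecLin +
        h • ∑ j, (LinearMap.toContinuousLinearMap (N j).mulVecLin).comp
          ((fderiv ℝ g (k j y)).comp (fderiv ℝ (k j) y))) y :=
    H1.add ((HasFDerivAt.fun_sum (fun j _ => H2 j)).const_smul h)
  have key : ∀ X : Matrix ι ι ℝ, LinearMap.toMatrix' X.mulVecLin = X := fun X => by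
    rw [← Matrix.toLin'_apply', LinearMap.toMatrix'_toLin']
  rw [jac, H.fderiv]
  simp only [ContinuousLinearMap.coe_add, ContinuousLinearMap.coe_smul,
    ContinuousLinearMap.coe_sum, ContinuousLinearMap.toLinearMap_comp, map_add, _root_.map_smul,
    map_sum, LinearMap.toMatrix'_comp, LinearMap.coe_toContinuousLinearMap, key, jac]

/-- The lower-block injection as a linear map. -/
noncomputable def sumElimL (n : ℕ) : (Fin n → ℝ) →ₗ[ℝ] ((Fin n ⊕ Fin n) → ℝ) where
  toFun v := Sum.elim 0 v
  map_add' u v := by funext x; cases x <;> simp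
  map_smul' r v := by funext x; cases x <;> simp

lemma g_struct (n : ℕ) (gt : (Fin n → ℝ) → (Fin n → ℝ)) (hgt : Differentiable ℝ gt)
    (g : ((Fin n ⊕ Fin n) → ℝ) → ((Fin n ⊕ Fin n) → ℝ))
    (hg : ∀ y, g y = Sum.elim (0 : Fin n → ℝ) (gt (y ∘ Sum.inl))) :
    Differentiable ℝ g ∧ ∀ x, ∃ G, jac g x = Matrix.fromBlocks 0 0 G 0 := by
  set L₁ : ((Fin n ⊕ Fin n) → ℝ) →L[ℝ] (Fin n → ℝ) :=
    LinearMap.toContinuousLinearMap (LinearMap.funLeft ℝ ℝ Sum.inl) with hL₁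
  set L₂ : (Fin n → ℝ) →L[ℝ] ((Fin n ⊕ Fin n) → ℝ) :=
    LinearMap.toContinuousLinearMap (sumElimL n) with hL₂
  have hgeq : g = fun y => L₂ (gt (L₁ y)) := by
    funext y
    simp [hg y, hL₁, hL₂, LinearMap.coe_toContinuousLinearMap', sumElimL, LinearMap.funLeft]
  have hdiff : Differentiable ℝ g := by
    rw [hgeq]
    exact L₂.differentiable.comp (hgt.comp L₁.differentiable)
  refine ⟨hdiff, fun x => ?_⟩
  have hfd : fderiv ℝ g x = L₂.comp ((fderiv ℝ gt (L₁ x)).comp L₁) := by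
    conv_lhs => rw [hgeq]
    exact (L₂.hasFDerivAt.comp x (((hgt (L₁ x)).hasFDerivAt).comp x L₁.hasFDerivAt)).fderiv
  refine ⟨Matrix.of (fun a b => jac g x (Sum.inr a) (Sum.inl b)), ?_⟩
  ext p q
  have happ : ∀ v, (fderiv ℝ g x) v
      = Sum.elim (0 : Fin n → ℝ) ((fderiv ℝ gt (L₁ x)) (v ∘ Sum.inl)) := by
    intro v
    rw [hfd]
    simp [hL₁, hL₂, LinearMap.coe_toContinuousLinearMap', sumElimL, LinearMap.funLeft]
  have hjac : ∀ p q, jac g x p q =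
      Sum.elim (0 : Fin n → ℝ)
        ((fderiv ℝ gt (L₁ x)) ((fun j' => if j' = q then (1:ℝ) else 0) ∘ Sum.inl)) p := by
    intro p q
    rw [jac, LinearMap.toMatrix'_apply]
    rw [ContinuousLinearMap.coe_coe, happ]
    rw [show (Pi.single q 1 : Fin n ⊕ Fin n → ℝ) = fun j' => if j' = q then 1 else 0 from
      funext fun j' => Pi.single_apply q 1 j']
  cases p with
  | inl a =>
    rw [hjac]
    cases q <;> simp [Matrix.fromBlocks]
  | inr a =>
    cases q with
    | inl b => simp [Matrix.fromBlocks]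
    | inr b =>
      rw [hjac]
      have : ((fun j' : Fin n ⊕ Fin n => if j' = Sum.inr b then (1:ℝ) else 0) ∘ Sum.inl)
          = (0 : (Fin n → ℝ)) := by
        funext j; simp
      rw [this]
      simp [Matrix.fromBlocks]

lemma det_exp_one (n : ℕ) (h : ℝ) (Ω : Matrix (Fin n) (Fin n) ℝ)
    (K : Matrix (Fin n ⊕ Fin n) (Fin n ⊕ Fin n) ℝ)
    (hK : K = fromBlocks 0 1 (-Ω) 0) :
    (NormedSpace.exp (h • K)).det = 1 := by
  set S : Matrix (Fin n ⊕ Fin n) (Fin n ⊕ Fin n) ℝ := fromBlocks 1 0 0 (-1) with hS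
  have hSS : S * S = 1 := by
    rw [hS, Matrix.fromBlocks_multiply]
    simp [← Matrix.fromBlocks_one]
  have hSinv : S⁻¹ = S := Matrix.inv_eq_right_inv hSS
  have hKS : S * K * S = -K := by
    rw [hK, hS, Matrix.fromBlocks_multiply, Matrix.fromBlocks_multiply, Matrix.fromBlocks_neg]
    norm_num
  have hconj : S * (h • K) * S⁻¹ = -(h • K) := by
    rw [hSinv, Matrix.mul_smul, Matrix.smul_mul, hKS, smul_neg]
  have hSunit : IsUnit S := ⟨⟨S, S, hSS, hSS⟩, rfl⟩
  have hE : NormedSpace.exp (-(h • K)) = S * NormedSpace.exp (h • K) * S⁻¹ := by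
    rw [← hconj]
    exact Matrix.exp_conj S _ hSunit
  have hdetneg : (NormedSpace.exp (-(h • K))).det = (NormedSpace.exp (h • K)).det := by
    rw [hE, hSinv, Matrix.det_mul, Matrix.det_mul, mul_right_comm, ← Matrix.det_mul, hSS,
      Matrix.det_one, one_mul]
  have hsq : (NormedSpace.exp (h • K)).det * (NormedSpace.exp (h • K)).det = 1 := by
    have h2 : NormedSpace.exp (h • K) * NormedSpace.exp (-(h • K)) = 1 := by
      rw [← Matrix.exp_add_of_commute _ _ ((Commute.refl (h • K)).neg_right),
        add_neg_cancel, NormedSpace.exp_zero]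
    calc (NormedSpace.exp (h • K)).det * (NormedSpace.exp (h • K)).det
        = (NormedSpace.exp (h • K)).det * (NormedSpace.exp (-(h • K))).det := by
          rw [hdetneg]
      _ = (NormedSpace.exp (h • K) * NormedSpace.exp (-(h • K))).det := by
          rw [Matrix.det_mul]
      _ = 1 := by rw [h2, Matrix.det_one]
  have hnn : 0 ≤ (NormedSpace.exp (h • K)).det := by
    have hhalf : h • K = (h / 2) • K + (h / 2) • K := by
      rw [← add_smul]; norm_num
    rw [hhalf, Matrix.exp_add_of_commute _ _ (Commute.refl _), Matrix.det_mul]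
    exact mul_self_nonneg _
  rcases mul_self_eq_one_iff.mp hsq with h1 | h1
  · exact h1
  · linarith

/-- **Corollary 5.5.** The two-stage ERKN integrator (a special symplectic exponential
integrator for `K = [[0,I],[−Ω,0]]` and `g(q,p) = (0, g̃(q))`) with `c₁ = c₂` preserves
volume for the separable partitioned system `(q,p)' = (p, −Ω·q + g̃(q))`. -/
theorem stmt_16 (n : ℕ) (h : ℝ) (Ω : Matrix (Fin n) (Fin n) ℝ)
    (K : Matrix (Fin n ⊕ Fin n) (Fin n ⊕ Fin n) ℝ)
    (hK : K = fromBlocks 0 1 (-Ω) 0)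
    (gt : (Fin n → ℝ) → (Fin n → ℝ)) (hgt : Differentiable ℝ gt)
    (g : ((Fin n ⊕ Fin n) → ℝ) → ((Fin n ⊕ Fin n) → ℝ))
    (hg : ∀ y, g y = Sum.elim (0 : Fin n → ℝ) (gt (y ∘ Sum.inl)))
    (c : Fin 2 → ℝ) (hc : c 0 = c 1)
    (A : Matrix (Fin 2) (Fin 2) ℝ) (b : Fin 2 → ℝ)
    (hsymp : IsSymplecticRK A b) (hb : ∀ i, b i ≠ 0)
    (k : Fin 2 → ((Fin n ⊕ Fin n) → ℝ) → ((Fin n ⊕ Fin n) → ℝ))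
    (hk : ∀ i, Differentiable ℝ (k i))
    (hkdef : ∀ i y, k i y =
      (NormedSpace.exp ((c i * h) • K)).mulVec y +
        h • ∑ j, (A i j • NormedSpace.exp (((c i - c j) * h) • K)).mulVec (g (k j y)))
    (φ : ((Fin n ⊕ Fin n) → ℝ) → ((Fin n ⊕ Fin n) → ℝ))
    (hφ : ∀ y, φ y =
      (NormedSpace.exp (h • K)).mulVec y +
        h • ∑ i, (b i • NormedSpace.exp (((1 - c i) * h) • K)).mulVec (g (k i y)))
    (F : (((Fin n ⊕ Fin n)) → ℝ) →
      Matrix (Fin 2 × (Fin n ⊕ Fin n)) (Fin 2 × (Fin n ⊕ Fin n)) ℝ)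
    (hF : ∀ y p q, F y p q = if p.1 = q.1 then jac g (k p.1 y) p.2 q.2 else 0)
    (Ablk : Matrix (Fin 2 × (Fin n ⊕ Fin n)) (Fin 2 × (Fin n ⊕ Fin n)) ℝ)
    (hAblk : ∀ p q, Ablk p q =
      A p.1 q.1 * NormedSpace.exp (((c p.1 - c q.1) * h) • K) p.2 q.2) :
    ∀ y : (Fin n ⊕ Fin n) → ℝ,
      IsUnit ((1 : Matrix (Fin 2 × (Fin n ⊕ Fin n)) (Fin 2 × (Fin n ⊕ Fin n)) ℝ) -
        h • (Ablk * F y)) →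
      (jac φ y).det = 1 := by
  intro y _
  obtain ⟨hgdiff, hstruct⟩ := g_struct n gt hgt g hg
  have hcc : ∀ i j : Fin 2, c i = c j := by
    intro i j
    fin_cases i <;> fin_cases j
    · rfl
    · exact hc
    · exact hc.symm
    · rfl
  have hDD : ∀ x x', jac g x * jac g x' = 0 := by
    intro x x'
    obtain ⟨G, hG⟩ := hstruct x
    obtain ⟨G', hG'⟩ := hstruct x'
    rw [hG, hG', Matrix.fromBlocks_multiply]
    simp
  set Ec := NormedSpace.exp ((c 0 * h) • K) with hEc
  set E1 := NormedSpace.exp (((1 - c 0) * h) • K) with hE1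
  have hexp0 : ∀ i j : Fin 2, NormedSpace.exp (((c i - c j) * h) • K) = 1 := by
    intro i j
    rw [hcc i j, sub_self, zero_mul, zero_smul, NormedSpace.exp_zero]
  have hEsplit : NormedSpace.exp (h • K) = E1 * Ec := by
    have hadd : h • K = ((1 - c 0) * h) • K + (c 0 * h) • K := by
      rw [← add_smul]; ring_nf
    rw [hadd, hE1, hEc]
    exact Matrix.exp_add_of_commute _ _ (((Commute.refl K).smul_left _).smul_right _)
  have hJk : ∀ i, jac (k i) y
      = Ec + h • ∑ j, A i j • (jac g (k j y) * jac (k j) y) := by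
    intro i
    have hfun : k i = fun y => (NormedSpace.exp ((c i * h) • K)).mulVec y +
        h • ∑ j, (A i j • NormedSpace.exp (((c i - c j) * h) • K)).mulVec (g (k j y)) :=
      funext (hkdef i)
    conv_lhs => rw [hfun]
    rw [jac_shape_s16 _ _ _ _ _ hgdiff hk y]
    rw [hcc i 0]
    have hz : ∀ j ∈ Finset.univ,
        (A i j • NormedSpace.exp (((c 0 - c j) * h) • K)) *
          (jac g (k j y) * jac (k j) y)
        = A i j • (jac g (k j y) * jac (k j) y) := by
      intro j _
      rw [hexp0 0 j, smul_mul_assoc, one_mul]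
    rw [Finset.sum_congr rfl hz]
  have hDJk : ∀ i, jac g (k i y) * jac (k i) y = jac g (k i y) * Ec := by
    intro i
    rw [hJk i, Matrix.mul_add, Matrix.mul_smul, Finset.mul_sum]
    have hz : ∀ j ∈ Finset.univ,
        jac g (k i y) * (A i j • (jac g (k j y) * jac (k j) y)) = 0 := by
      intro j _
      rw [Matrix.mul_smul, ← Matrix.mul_assoc, hDD, Matrix.zero_mul, smul_zero]
    rw [Finset.sum_congr rfl hz, Finset.sum_const_zero, smul_zero, add_zero]
  have hJφ : jac φ y = E1 * (1 + h • ∑ i, b i • jac g (k i y)) * Ec := by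
    have hfun : φ = fun y => (NormedSpace.exp (h • K)).mulVec y +
        h • ∑ i, (b i • NormedSpace.exp (((1 - c i) * h) • K)).mulVec (g (k i y)) :=
      funext hφ
    conv_lhs => rw [hfun]
    rw [jac_shape_s16 _ _ _ _ _ hgdiff hk y]
    have hterm : ∀ i ∈ Finset.univ, (b i • NormedSpace.exp (((1 - c i) * h) • K)) *
        (jac g (k i y) * jac (k i) y) = b i • (E1 * (jac g (k i y) * Ec)) := by
      intro i _
      rw [hcc i 0, hDJk i, ← hE1, Matrix.smul_mul]
    rw [Finset.sum_congr rfl hterm, hEsplit]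
    rw [Matrix.mul_add, Matrix.add_mul, Matrix.mul_one]
    congr 1
    rw [Matrix.mul_smul, Matrix.smul_mul, Finset.mul_sum, Finset.sum_mul]
    congr 1
    refine Finset.sum_congr rfl fun i _ => ?_
    rw [Matrix.mul_smul, Matrix.smul_mul, Matrix.mul_assoc]
  obtain ⟨G0, hG0⟩ := hstruct (k 0 y)
  obtain ⟨G1, hG1⟩ := hstruct (k 1 y)
  have hmid : (1 : Matrix (Fin n ⊕ Fin n) (Fin n ⊕ Fin n) ℝ)
        + h • ∑ i, b i • jac g (k i y)
      = Matrix.fromBlocks 1 0 (h • (b 0 • G0 + b 1 • G1)) 1 := by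
    rw [Fin.sum_univ_two, hG0, hG1, ← Matrix.fromBlocks_one]
    rw [Matrix.fromBlocks_smul, Matrix.fromBlocks_smul, Matrix.fromBlocks_add,
      Matrix.fromBlocks_smul, Matrix.fromBlocks_add]
    simp
  rw [hJφ, Matrix.det_mul, Matrix.det_mul, hmid, Matrix.det_fromBlocks_zero₁₂]
  simp only [Matrix.det_one, mul_one, one_mul]
  rw [← Matrix.det_mul, ← hEsplit]
  exact det_exp_one n h Ω K hK
end

section
/- (Corollary 5.6) Let s = 2 and suppose (A,b) is symplectic with b_1 ≠ 0 and b_2 ≠ 0. Then at every point (q,p) ∈ ℝ^n × ℝ^n where the (2n)×(2n) matrix I_{2n} − h²·T is invertible, with T the 2×2 block matrix whose (i,j) block is a_{ij}·(c_i−c_j)·Dg̃(Q_j(q,p)), the Jacobian of the RKN update map satisfies det(DΨ(q,p)) = 1; that is, the two-stage RKN method preserves volume for the second-order system q'' = g̃(q). -/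
open Matrix

/-- The Jacobian matrix of a map `g̃ : ℝ^n → ℝ^n` at a point (same as `jac`, restated
for stage values of the RKN method). -/
noncomputable def jacN {n : ℕ} (f : (Fin n → ℝ) → (Fin n → ℝ)) (y : Fin n → ℝ) :
    Matrix (Fin n) (Fin n) ℝ :=
  LinearMap.toMatrix' ((fderiv ℝ f y).toLinearMap)

/-! ### Auxiliary material for the proof -/

/-- Projection onto the `inl` coordinates, as a continuous linear map. -/
noncomputable def PlC (n : ℕ) : ((Fin n ⊕ Fin n) → ℝ) →L[ℝ] (Fin n → ℝ) :=
  (LinearMap.funLeft ℝ ℝ Sum.inl).toContinuousLinearMap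

/-- Projection onto the `inr` coordinates, as a continuous linear map. -/
noncomputable def PrC (n : ℕ) : ((Fin n ⊕ Fin n) → ℝ) →L[ℝ] (Fin n → ℝ) :=
  (LinearMap.funLeft ℝ ℝ Sum.inr).toContinuousLinearMap

/-- Inclusion of the `inl` coordinates. -/
def IlL (n : ℕ) : (Fin n → ℝ) →ₗ[ℝ] ((Fin n ⊕ Fin n) → ℝ) where
  toFun u := Sum.elim u 0
  map_add' u v := by funext x; cases x <;> simp
  map_smul' r u := by funext x; cases x <;> simp

/-- Inclusion of the `inr` coordinates. -/
def IrL (n : ℕ) : (Fin n → ℝ) →ₗ[ℝ] ((Fin n ⊕ Fin n) → ℝ) where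
  toFun u := Sum.elim 0 u
  map_add' u v := by funext x; cases x <;> simp
  map_smul' r u := by funext x; cases x <;> simp

noncomputable def IlC (n : ℕ) : (Fin n → ℝ) →L[ℝ] ((Fin n ⊕ Fin n) → ℝ) :=
  (IlL n).toContinuousLinearMap

noncomputable def IrC (n : ℕ) : (Fin n → ℝ) →L[ℝ] ((Fin n ⊕ Fin n) → ℝ) :=
  (IrL n).toContinuousLinearMap

def e2 (n : ℕ) : Fin 2 × Fin n ≃ (Fin n ⊕ Fin n) where
  toFun p := if p.1 = 0 then Sum.inl p.2 else Sum.inr p.2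
  invFun x := Sum.elim (fun q => (0, q)) (fun q => (1, q)) x
  left_inv := by rintro ⟨i, p⟩; fin_cases i <;> simp
  right_inv := by rintro (q | q) <;> simp

lemma one_apply_prod {n : ℕ} (i j : Fin 2) (p q : Fin n) :
    (1 : Matrix (Fin 2 × Fin n) (Fin 2 × Fin n) ℝ) (i, p) (j, q) =
      if i = j then (1 : Matrix (Fin n) (Fin n) ℝ) p q else 0 := by
  by_cases hij : i = j
  · subst hij
    by_cases hpq : p = q
    · subst hpq; simp [Matrix.one_apply]
    · simp [Matrix.one_apply, hpq, Prod.ext_iff]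
  · simp [Matrix.one_apply, hij, Prod.ext_iff]

lemma reindex_block {n : ℕ} (f : Fin 2 → Fin 2 → ℝ) (J : Fin 2 → Matrix (Fin n) (Fin n) ℝ)
    (hdiag : ∀ i, f i i = 0) :
    (Matrix.of fun (p q : Fin 2 × Fin n) =>
      (1 : Matrix (Fin 2 × Fin n) (Fin 2 × Fin n) ℝ) p q + f p.1 q.1 * J q.1 p.2 q.2).det
    = (fromBlocks 1 ((f 0 1) • J 1) ((f 1 0) • J 0) 1).det := by
  rw [← Matrix.det_reindex_self (e2 n)]
  congr 1
  ext x y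
  cases x <;> cases y <;>
    simp [e2, Matrix.reindex_apply, fromBlocks, one_apply_prod, hdiag, Matrix.one_apply]

lemma det_key {n : ℕ} (h : ℝ) (c : Fin 2 → ℝ) (A : Matrix (Fin 2) (Fin 2) ℝ) (b : Fin 2 → ℝ)
    (hsymp : b 0 * A 0 1 + b 1 * A 1 0 - b 0 * b 1 = 0)
    (J : Fin 2 → Matrix (Fin n) (Fin n) ℝ) :
    (Matrix.of fun (p q : Fin 2 × Fin n) =>
        (1 : Matrix (Fin 2 × Fin n) (Fin 2 × Fin n) ℝ) p q
          + h ^ 2 * (b q.1 - A p.1 q.1) * (c p.1 - c q.1) * J q.1 p.2 q.2).det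
      = (Matrix.of fun (p q : Fin 2 × Fin n) =>
        (1 : Matrix (Fin 2 × Fin n) (Fin 2 × Fin n) ℝ) p q
          - h ^ 2 * (A p.1 q.1 * (c p.1 - c q.1)) * J q.1 p.2 q.2).det := by
  have h1 := reindex_block (fun i j => h ^ 2 * (b j - A i j) * (c i - c j)) J (by simp)
  have h2 := reindex_block (fun i j => -(h ^ 2 * (A i j * (c i - c j)))) J (by simp)
  have e2' : (Matrix.of fun (p q : Fin 2 × Fin n) =>
        (1 : Matrix (Fin 2 × Fin n) (Fin 2 × Fin n) ℝ) p q
          - h ^ 2 * (A p.1 q.1 * (c p.1 - c q.1)) * J q.1 p.2 q.2)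
      = (Matrix.of fun (p q : Fin 2 × Fin n) =>
        (1 : Matrix (Fin 2 × Fin n) (Fin 2 × Fin n) ℝ) p q
          + (-(h ^ 2 * (A p.1 q.1 * (c p.1 - c q.1)))) * J q.1 p.2 q.2) := by
    ext p q; simp; ring
  rw [e2', h1, h2, det_fromBlocks_one₁₁, det_fromBlocks_one₁₁]
  simp only [Matrix.smul_mul, Matrix.mul_smul, smul_smul]
  have key : (h ^ 2 * (b 1 - A 0 1) * (c 0 - c 1)) * (h ^ 2 * (b 0 - A 1 0) * (c 1 - c 0))
      = (-(h ^ 2 * (A 0 1 * (c 0 - c 1)))) * (-(h ^ 2 * (A 1 0 * (c 1 - c 0)))) := by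
    linear_combination (h ^ 4 * (c 0 - c 1) ^ 2) * hsymp
  rw [key]

set_option maxHeartbeats 1000000 in
/-- **Corollary 5.6.** Two-stage RKN methods built from a symplectic RK pair with
nonzero weights preserve volume for the second-order system `q'' = g̃(q)`.
The phase space `ℝ^n × ℝ^n` is modelled as `(Fin n ⊕ Fin n) → ℝ`, the `inl`-part
being `q` and the `inr`-part being `p`. -/
theorem stmt_17 (n : ℕ) (h : ℝ) (c : Fin 2 → ℝ)
    (A : Matrix (Fin 2) (Fin 2) ℝ) (b : Fin 2 → ℝ)
    (hsymp : IsSymplecticRK A b) (hb : ∀ i, b i ≠ 0)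
    (gt : (Fin n → ℝ) → (Fin n → ℝ)) (hgt : Differentiable ℝ gt)
    (Q : Fin 2 → ((Fin n ⊕ Fin n) → ℝ) → (Fin n → ℝ))
    (hQ : ∀ i, Differentiable ℝ (Q i))
    (hQdef : ∀ i y, Q i y =
      (y ∘ Sum.inl) + (c i * h) • (y ∘ Sum.inr) +
        h ^ 2 • ∑ j, (A i j * (c i - c j)) • gt (Q j y))
    (Ψ : ((Fin n ⊕ Fin n) → ℝ) → ((Fin n ⊕ Fin n) → ℝ))
    (hΨ : ∀ y, Ψ y = Sum.elim
      ((y ∘ Sum.inl) + h • (y ∘ Sum.inr) + h ^ 2 • ∑ i, (b i * (1 - c i)) • gt (Q i y))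
      ((y ∘ Sum.inr) + h • ∑ i, b i • gt (Q i y)))
    (T : ((Fin n ⊕ Fin n) → ℝ) → Matrix (Fin 2 × Fin n) (Fin 2 × Fin n) ℝ)
    (hT : ∀ y p q, T y p q = A p.1 q.1 * (c p.1 - c q.1) * jacN gt (Q q.1 y) p.2 q.2) :
    ∀ y : (Fin n ⊕ Fin n) → ℝ,
      IsUnit ((1 : Matrix (Fin 2 × Fin n) (Fin 2 × Fin n) ℝ) - h ^ 2 • T y) →
        (jac Ψ y).det = 1 := by
  intro y hy
  -- Jacobians at the stage values
  set Jm : Fin 2 → Matrix (Fin n) (Fin n) ℝ := fun j => jacN gt (Q j y) with hJm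
  set Mi : Fin 2 → Matrix (Fin n) (Fin n ⊕ Fin n) ℝ :=
    fun i => LinearMap.toMatrix' (fderiv ℝ (Q i) y).toLinearMap with hMidef
  set MPl : Matrix (Fin n) (Fin n ⊕ Fin n) ℝ := LinearMap.toMatrix' (PlC n).toLinearMap with hMPldef
  set MPr : Matrix (Fin n) (Fin n ⊕ Fin n) ℝ := LinearMap.toMatrix' (PrC n).toLinearMap with hMPrdef
  -- step 1: derivative of the stages
  have hD : ∀ i, fderiv ℝ (Q i) y = PlC n + (c i * h) • PrC n +
      h ^ 2 • ∑ j, (A i j * (c i - c j)) •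
        ((fderiv ℝ gt (Q j y)).comp (fderiv ℝ (Q j) y)) := by
    intro i
    have hder : HasFDerivAt (Q i)
        (PlC n + (c i * h) • PrC n +
          h ^ 2 • ∑ j, (A i j * (c i - c j)) •
            ((fderiv ℝ gt (Q j y)).comp (fderiv ℝ (Q j) y))) y := by
      have heq : Q i = fun z => PlC n z + (c i * h) • PrC n z +
          h ^ 2 • ∑ j, (A i j * (c i - c j)) • gt (Q j z) := by
        funext z; exact hQdef i z
      rw [heq]
      refine HasFDerivAt.add (HasFDerivAt.add (PlC n).hasFDerivAt
        ((PrC n).hasFDerivAt.const_smul (c i * h))) ?_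
      refine HasFDerivAt.const_smul ?_ (h ^ 2)
      exact HasFDerivAt.fun_sum fun j _ =>
        (((hgt (Q j y)).hasFDerivAt.comp y ((hQ j y).hasFDerivAt))).fun_const_smul _
    exact hder.fderiv
  -- matrix version of the stage relation
  have hMi : ∀ i, Mi i = MPl + (c i * h) • MPr +
      h ^ 2 • ∑ j, (A i j * (c i - c j)) • (Jm j * Mi j) := by
    intro i
    have := congrArg (fun (L : ((Fin n ⊕ Fin n) → ℝ) →L[ℝ] (Fin n → ℝ)) =>
      LinearMap.toMatrix' L.toLinearMap) (hD i)
    simpa [hMidef, hMPldef, hMPrdef, hJm, jacN, ContinuousLinearMap.coe_sum,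
      map_add, _root_.map_smul, map_sum, LinearMap.toMatrix'_comp] using this
  -- entry lemmas for the projection matrices
  have hMPl : ∀ (p : Fin n) (q : Fin n ⊕ Fin n),
      MPl p q = Sum.elim (fun q' => if p = q' then (1:ℝ) else 0) (fun _ => (0:ℝ)) q := by
    intro p q
    cases q <;>
      simp [hMPldef, LinearMap.toMatrix'_apply, PlC, LinearMap.funLeft_apply, Function.comp, Pi.single_apply]
  have hMPr : ∀ (p : Fin n) (q : Fin n ⊕ Fin n),
      MPr p q = Sum.elim (fun _ => (0:ℝ)) (fun q' => if p = q' then (1:ℝ) else 0) q := by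
    intro p q
    cases q <;>
      simp [hMPrdef, LinearMap.toMatrix'_apply, PrC, LinearMap.funLeft_apply, Function.comp, Pi.single_apply]
  have hMiE : ∀ i p q, Mi i p q = MPl p q + (c i * h) * MPr p q +
      h ^ 2 * ∑ j, (A i j * (c i - c j)) * ∑ r, Jm j p r * Mi j r q := by
    intro i p q
    conv_lhs => rw [hMi i]
    simp only [Matrix.add_apply, Matrix.smul_apply, Matrix.sum_apply, smul_eq_mul,
      Matrix.mul_apply]
  -- the big matrices
  set E : Matrix (Fin 2 × Fin n) (Fin n ⊕ Fin n) ℝ :=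
    Matrix.of (fun p q => Sum.elim (fun q' => if p.2 = q' then (1:ℝ) else 0)
      (fun q' => if p.2 = q' then c p.1 * h else 0) q) with hE
  set M' : Matrix (Fin 2 × Fin n) (Fin n ⊕ Fin n) ℝ :=
    Matrix.of (fun p q => Mi p.1 p.2 q) with hM'
  set C : Matrix (Fin n ⊕ Fin n) (Fin 2 × Fin n) ℝ :=
    Matrix.of (fun x p => Sum.elim (fun q' => h ^ 2 * (b p.1 * (1 - c p.1)) * Jm p.1 q' p.2)
      (fun q' => h * (b p.1 * Jm p.1 q' p.2)) x) with hC
  set S : Matrix (Fin n ⊕ Fin n) (Fin n ⊕ Fin n) ℝ := fromBlocks 1 (h • 1) 0 1 with hS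
  set S' : Matrix (Fin n ⊕ Fin n) (Fin n ⊕ Fin n) ℝ := fromBlocks 1 (-(h • 1)) 0 1 with hS'
  -- key identity 1 : (1 - h² T) M' = E
  have key1 : ((1 : Matrix (Fin 2 × Fin n) (Fin 2 × Fin n) ℝ) - h ^ 2 • T y) * M' = E := by
    have expand : ((1 : Matrix (Fin 2 × Fin n) (Fin 2 × Fin n) ℝ) - h ^ 2 • T y) * M'
        = M' - h ^ 2 • (T y * M') := by
      rw [Matrix.sub_mul, Matrix.one_mul, Matrix.smul_mul]
    rw [expand]
    ext ⟨i, p⟩ q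
    have hTM : (T y * M') (i, p) q
        = ∑ j, (A i j * (c i - c j)) * ∑ r, Jm j p r * Mi j r q := by
      rw [Matrix.mul_apply, Fintype.sum_prod_type]
      refine Finset.sum_congr rfl fun j _ => ?_
      rw [Finset.mul_sum]
      refine Finset.sum_congr rfl fun r _ => ?_
      rw [hT y (i, p) (j, r)]
      simp only [hM', Matrix.of_apply, hJm]
      ring
    rw [Matrix.sub_apply, Matrix.smul_apply, hTM]
    simp only [Matrix.sub_apply, Matrix.smul_apply, smul_eq_mul, hTM, hM', Matrix.of_apply]
    rw [hMiE i p q]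
    cases q with
    | inl q' => simp [hE, hMPl, hMPr]
    | inr q' => simp [hE, hMPl, hMPr, mul_ite, mul_comm]
  -- derivative of Ψ
  have hDΨ : fderiv ℝ Ψ y = (IlC n).comp (PlC n + h • PrC n +
        h ^ 2 • ∑ i, (b i * (1 - c i)) • ((fderiv ℝ gt (Q i y)).comp (fderiv ℝ (Q i) y)))
      + (IrC n).comp (PrC n + h • ∑ i, b i • ((fderiv ℝ gt (Q i y)).comp (fderiv ℝ (Q i) y))) := by
    have heq : Ψ = fun z => IlC n (PlC n z + h • PrC n z +
          h ^ 2 • ∑ i, (b i * (1 - c i)) • gt (Q i z))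
        + IrC n (PrC n z + h • ∑ i, b i • gt (Q i z)) := by
      funext z
      rw [hΨ z]
      funext x
      cases x <;> simp [IlC, IrC, IlL, IrL, PlC, PrC]
    have hu : HasFDerivAt (fun z => PlC n z + h • PrC n z +
          h ^ 2 • ∑ i, (b i * (1 - c i)) • gt (Q i z))
        (PlC n + h • PrC n + h ^ 2 • ∑ i, (b i * (1 - c i)) •
          ((fderiv ℝ gt (Q i y)).comp (fderiv ℝ (Q i) y))) y := by
      refine ((PlC n).hasFDerivAt.add ((PrC n).hasFDerivAt.const_smul h)).add ?_
      refine HasFDerivAt.const_smul ?_ (h ^ 2)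
      exact HasFDerivAt.fun_sum fun i _ =>
        (((hgt (Q i y)).hasFDerivAt.comp y ((hQ i y).hasFDerivAt))).fun_const_smul _
    have hv : HasFDerivAt (fun z => PrC n z + h • ∑ i, b i • gt (Q i z))
        (PrC n + h • ∑ i, b i • ((fderiv ℝ gt (Q i y)).comp (fderiv ℝ (Q i) y))) y := by
      refine (PrC n).hasFDerivAt.add ?_
      refine HasFDerivAt.const_smul ?_ h
      exact HasFDerivAt.fun_sum fun i _ =>
        (((hgt (Q i y)).hasFDerivAt.comp y ((hQ i y).hasFDerivAt))).fun_const_smul _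
    have hder : HasFDerivAt Ψ ((IlC n).comp (PlC n + h • PrC n +
          h ^ 2 • ∑ i, (b i * (1 - c i)) • ((fderiv ℝ gt (Q i y)).comp (fderiv ℝ (Q i) y)))
        + (IrC n).comp (PrC n + h • ∑ i, b i •
          ((fderiv ℝ gt (Q i y)).comp (fderiv ℝ (Q i) y)))) y := by
      rw [heq]
      exact ((IlC n).hasFDerivAt.comp y hu).add ((IrC n).hasFDerivAt.comp y hv)
    exact hder.fderiv
  -- matrix version of the Ψ derivative
  set MIl : Matrix (Fin n ⊕ Fin n) (Fin n) ℝ := LinearMap.toMatrix' (IlC n).toLinearMap with hMIl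
  set MIr : Matrix (Fin n ⊕ Fin n) (Fin n) ℝ := LinearMap.toMatrix' (IrC n).toLinearMap with hMIr
  set MDu : Matrix (Fin n) (Fin n ⊕ Fin n) ℝ :=
    MPl + h • MPr + h ^ 2 • ∑ i, (b i * (1 - c i)) • (Jm i * Mi i) with hMDu
  set MDv : Matrix (Fin n) (Fin n ⊕ Fin n) ℝ :=
    MPr + h • ∑ i, b i • (Jm i * Mi i) with hMDv
  have hjacM : jac Ψ y = MIl * MDu + MIr * MDv := by
    rw [jac, hDΨ]
    simp [hMIl, hMIr, hMDu, hMDv, hMPldef, hMPrdef, hMidef, hJm, jacN,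
      ContinuousLinearMap.coe_sum, map_add, _root_.map_smul, map_sum,
      LinearMap.toMatrix'_comp, Matrix.mul_add, Matrix.mul_smul, Matrix.mul_one]
  have hMIlE : ∀ (x : Fin n ⊕ Fin n) (r : Fin n),
      MIl x r = Sum.elim (fun p => if p = r then (1:ℝ) else 0) (fun _ => (0:ℝ)) x := by
    intro x r
    cases x <;> simp [hMIl, LinearMap.toMatrix'_apply, IlC, IlL, Pi.single_apply]
  have hMIrE : ∀ (x : Fin n ⊕ Fin n) (r : Fin n),
      MIr x r = Sum.elim (fun _ => (0:ℝ)) (fun p => if p = r then (1:ℝ) else 0) x := by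
    intro x r
    cases x <;> simp [hMIr, LinearMap.toMatrix'_apply, IrC, IrL, Pi.single_apply]
  -- entry computations
  have hCMl : ∀ (p : Fin n) (q : Fin n ⊕ Fin n), (C * M') (Sum.inl p) q
      = h ^ 2 * ∑ j, (b j * (1 - c j)) * ∑ r, Jm j p r * Mi j r q := by
    intro p q
    rw [Matrix.mul_apply, Fintype.sum_prod_type, Finset.mul_sum]
    refine Finset.sum_congr rfl fun j _ => ?_
    rw [Finset.mul_sum, Finset.mul_sum]
    refine Finset.sum_congr rfl fun r _ => ?_
    simp only [hC, Matrix.of_apply, hM', Sum.elim_inl]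
    ring
  have hCMr : ∀ (p : Fin n) (q : Fin n ⊕ Fin n), (C * M') (Sum.inr p) q
      = h * ∑ j, b j * ∑ r, Jm j p r * Mi j r q := by
    intro p q
    rw [Matrix.mul_apply, Fintype.sum_prod_type, Finset.mul_sum]
    refine Finset.sum_congr rfl fun j _ => ?_
    rw [Finset.mul_sum, Finset.mul_sum]
    refine Finset.sum_congr rfl fun r _ => ?_
    simp only [hC, Matrix.of_apply, hM', Sum.elim_inr]
    ring
  have hMDuE : ∀ (p : Fin n) (q : Fin n ⊕ Fin n), MDu p q
      = MPl p q + h * MPr p q + h ^ 2 * ∑ j, (b j * (1 - c j)) * ∑ r, Jm j p r * Mi j r q := by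
    intro p q
    simp only [hMDu, Matrix.add_apply, Matrix.smul_apply, Matrix.sum_apply, smul_eq_mul,
      Matrix.mul_apply]
  have hMDvE : ∀ (p : Fin n) (q : Fin n ⊕ Fin n), MDv p q
      = MPr p q + h * ∑ j, b j * ∑ r, Jm j p r * Mi j r q := by
    intro p q
    simp only [hMDv, Matrix.add_apply, Matrix.smul_apply, Matrix.sum_apply, smul_eq_mul,
      Matrix.mul_apply]
  -- key identity 2 : jac Ψ = S + C M'
  have key2 : jac Ψ y = S + C * M' := by
    rw [hjacM]
    ext x q
    cases x with
    | inl p =>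
      have hL : (MIl * MDu + MIr * MDv) (Sum.inl p) q = MDu p q := by
        simp [Matrix.add_apply, Matrix.mul_apply, hMIlE, hMIrE, ite_mul]
      rw [hL, Matrix.add_apply, hCMl, hMDuE]
      cases q with
      | inl q' => simp [hS, hMPl, hMPr, Matrix.one_apply]
      | inr q' => simp [hS, hMPl, hMPr, Matrix.one_apply, mul_comm]
    | inr p =>
      have hL : (MIl * MDu + MIr * MDv) (Sum.inr p) q = MDv p q := by
        simp [Matrix.add_apply, Matrix.mul_apply, hMIlE, hMIrE, ite_mul]
      rw [hL, Matrix.add_apply, hCMr, hMDvE]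
      cases q with
      | inl q' => simp [hS, hMPl, hMPr, Matrix.one_apply]
      | inr q' => simp [hS, hMPl, hMPr, Matrix.one_apply]
  -- determinant bookkeeping
  have hSS' : S * S' = 1 := by
    rw [hS, hS', fromBlocks_multiply]
    simp [← fromBlocks_one]
  have hdetS : S.det = 1 := by
    rw [hS, det_fromBlocks_zero₂₁]
    simp
  have step1 : jac Ψ y = S * (1 + S' * (C * M')) := by
    have e1 : S * (1 + S' * (C * M')) = S * 1 + S * (S' * (C * M')) := Matrix.mul_add _ _ _
    rw [e1, Matrix.mul_one, ← Matrix.mul_assoc S S' (C * M'), hSS', Matrix.one_mul, key2]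
  have d1 : (jac Ψ y).det = ((1 : Matrix (Fin 2 × Fin n) (Fin 2 × Fin n) ℝ)
      + M' * (S' * C)).det := by
    rw [step1, det_mul, hdetS, one_mul, ← Matrix.mul_assoc S' C M',
      Matrix.det_one_add_mul_comm (S' * C) M']
  set P : Matrix (Fin 2 × Fin n) (Fin 2 × Fin n) ℝ := 1 - h ^ 2 • T y with hPdef
  have key3 : P * (1 + M' * (S' * C)) = P + E * (S' * C) := by
    have e1 : P * (1 + M' * (S' * C)) = P * 1 + P * (M' * (S' * C)) := Matrix.mul_add _ _ _
    rw [e1, Matrix.mul_one, ← Matrix.mul_assoc P M' (S' * C), hPdef, key1]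
  have d3 : P.det * ((1 : Matrix (Fin 2 × Fin n) (Fin 2 × Fin n) ℝ)
      + M' * (S' * C)).det = (P + E * (S' * C)).det := by
    rw [← det_mul, key3]
  -- entries of S' C and E (S' C)
  have hS'C : S' * C = Matrix.of (fun x p => Sum.elim
      (fun q' => -(h ^ 2 * (b p.1 * c p.1)) * Jm p.1 q' p.2)
      (fun q' => h * (b p.1 * Jm p.1 q' p.2)) x) := by
    ext x p
    cases x with
    | inl q' =>
      rw [Matrix.mul_apply, Fintype.sum_sum_type]
      simp [hS', hC, Matrix.one_apply, ite_mul, Finset.sum_ite_eq, Finset.sum_ite_eq']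
      ring
    | inr q' =>
      rw [Matrix.mul_apply, Fintype.sum_sum_type]
      simp [hS', hC, Matrix.one_apply, ite_mul, Finset.sum_ite_eq, Finset.sum_ite_eq']
  have hESC : E * (S' * C) = Matrix.of (fun p q : Fin 2 × Fin n =>
      h ^ 2 * b q.1 * (c p.1 - c q.1) * Jm q.1 p.2 q.2) := by
    rw [hS'C]
    ext p q
    rw [Matrix.mul_apply, Fintype.sum_sum_type]
    simp [hE, ite_mul, Finset.sum_ite_eq, Finset.sum_ite_eq']
    ring
  have hP : P = Matrix.of (fun p q : Fin 2 × Fin n =>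
      (1 : Matrix (Fin 2 × Fin n) (Fin 2 × Fin n) ℝ) p q
        - h ^ 2 * (A p.1 q.1 * (c p.1 - c q.1)) * Jm q.1 p.2 q.2) := by
    ext p q
    simp only [hPdef, Matrix.sub_apply, Matrix.smul_apply, smul_eq_mul, Matrix.of_apply,
      hT y p q, hJm]
    ring
  have hR : P + E * (S' * C) = Matrix.of (fun p q : Fin 2 × Fin n =>
      (1 : Matrix (Fin 2 × Fin n) (Fin 2 × Fin n) ℝ) p q
        + h ^ 2 * (b q.1 - A p.1 q.1) * (c p.1 - c q.1) * Jm q.1 p.2 q.2) := by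
    rw [hESC, hP]
    ext p q
    simp only [Matrix.add_apply, Matrix.of_apply]
    ring
  have key4 : (P + E * (S' * C)).det = P.det := by
    rw [hR, hP]
    exact det_key h c A b (hsymp 0 1) Jm
  have hPne : P.det ≠ 0 := by
    have h2 := (Matrix.isUnit_iff_isUnit_det P).mp hy
    exact h2.ne_zero
  have final : ((1 : Matrix (Fin 2 × Fin n) (Fin 2 × Fin n) ℝ) + M' * (S' * C)).det = 1 := by
    have h4 : P.det * ((1 : Matrix (Fin 2 × Fin n) (Fin 2 × Fin n) ℝ)
        + M' * (S' * C)).det = P.det * 1 := by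
      rw [mul_one, d3, key4]
    exact mul_left_cancel₀ hPne h4
  rw [d1, final]
end
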